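/- arXiv:1702.07697 — 3 statements merged into one kernel-verified Lean document; each statement's English description precedes it below -/
import Mathlib

section
/- Let a(z), b(z) ∈ C[z,z^{-1}] be Laurent polynomials, k ∈ Z, and σ, τ ∈ {-1,1}. Define I = (1/2)‖(a + σ z^k conj(a~))(b + τ z^k conj(b~))‖_2^2 + (1/2)‖(a~ - σ z^k conj(a))(b~ - τ z^k conj(b))‖_2^2, where a~(z)=a(-z) and conj denotes the Laurent-polynomial conjugate (conj(Σ a_j z^j) = Σ conj(a_j) z^{-j}). Then I = 2‖ab‖_2^2 + 2‖a b~‖_2^2 + 2στ Re ∫ a a~ conj(b b~) + 2στ Re ∫ z^{-2k} a a~ b b~, where ∫ h denotes the constant coefficient of the Laurent polynomial h, and ‖·‖_2 is the L^2 norm on the unit circle. -/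
noncomputable def circ (θ : ℝ) : ℂ := Complex.exp (θ * Complex.I)

noncomputable def evalL (c : ℤ →₀ ℂ) (z : ℂ) : ℂ := c.sum fun j a => a * z ^ j

lemma circ_ne (θ : ℝ) : circ θ ≠ 0 := Complex.exp_ne_zero _

lemma circ_pi (θ : ℝ) : circ (θ + Real.pi) = -circ θ := by
  unfold circ
  push_cast
  rw [add_mul, Complex.exp_add, Complex.exp_pi_mul_I]
  ring

lemma cont_circ_zpow (k : ℤ) : Continuous fun θ : ℝ => circ θ ^ k := by
  have h : (fun θ : ℝ => circ θ ^ k) = fun θ : ℝ => Complex.exp ((k : ℂ) * ((θ : ℂ) * Complex.I)) := by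
    funext θ
    rw [circ, ← Complex.exp_int_mul]
  rw [h]
  exact Complex.continuous_exp.comp (by continuity)

lemma cont_evalL (c : ℤ →₀ ℂ) : Continuous fun θ : ℝ => evalL c (circ θ) := by
  simp only [evalL, Finsupp.sum]
  exact continuous_finset_sum _ fun j _ => continuous_const.mul (cont_circ_zpow j)

lemma cont_evalL_neg (c : ℤ →₀ ℂ) : Continuous fun θ : ℝ => evalL c (-(circ θ)) := by
  have h : (fun θ : ℝ => evalL c (-(circ θ))) = fun θ : ℝ => evalL c (circ (θ + Real.pi)) := by
    funext θ; rw [circ_pi]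
  rw [h]
  exact (cont_evalL c).comp (continuous_add_right Real.pi)

lemma abs_circ_zpow (θ : ℝ) (k : ℤ) : ‖circ θ ^ k‖ = 1 := by
  rw [norm_zpow, circ, Complex.norm_exp_ofReal_mul_I, one_zpow]

lemma circ_zpow_mul_conj (θ : ℝ) (k : ℤ) :
    circ θ ^ k * (starRingEnd ℂ) (circ θ ^ k) = 1 := by
  rw [Complex.mul_conj, Complex.normSq_eq_norm_sq, abs_circ_zpow]
  norm_num

lemma integral_zero_of_antiperiodic (G : ℝ → ℝ) (hG : Continuous G)
    (h : ∀ θ, G θ + G (θ + Real.pi) = 0) :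
    ∫ θ in (0:ℝ)..(2 * Real.pi), G θ = 0 := by
  have h1 : (∫ θ in (0:ℝ)..(2 * Real.pi), G θ)
      = (∫ θ in (0:ℝ)..Real.pi, G θ) + ∫ θ in Real.pi..(2 * Real.pi), G θ :=
    (intervalIntegral.integral_add_adjacent_intervals
      (hG.intervalIntegrable _ _) (hG.intervalIntegrable _ _)).symm
  have h2 : (∫ θ in (0:ℝ)..Real.pi, G (θ + Real.pi)) = ∫ θ in Real.pi..(2 * Real.pi), G θ := by
    rw [intervalIntegral.integral_comp_add_right]
    norm_num [two_mul]
  have h3 : (∫ θ in (0:ℝ)..Real.pi, (G θ + G (θ + Real.pi)))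
      = (∫ θ in (0:ℝ)..Real.pi, G θ) + ∫ θ in (0:ℝ)..Real.pi, G (θ + Real.pi) :=
    intervalIntegral.integral_add (hG.intervalIntegrable _ _)
      ((hG.comp (continuous_add_right Real.pi)).intervalIntegrable _ _)
  have h4 : (∫ θ in (0:ℝ)..Real.pi, (G θ + G (θ + Real.pi))) = 0 := by
    simp [h]
  rw [h1, ← h2, ← h3, h4]

lemma re_intervalIntegral {f : ℝ → ℂ} {x y : ℝ}
    (hf : IntervalIntegrable f MeasureTheory.volume x y) :
    (∫ θ in x..y, f θ).re = ∫ θ in x..y, (f θ).re := by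
  have h1 := integral_re (𝕜 := ℂ) hf.1
  have h2 := integral_re (𝕜 := ℂ) hf.2
  simp only [RCLike.re_to_complex] at h1 h2
  rw [intervalIntegral, intervalIntegral, Complex.sub_re, ← h1, ← h2]

open Complex in
lemma cnorm (z : ℂ) : ((‖z‖ : ℂ))^2 = z * (starRingEnd ℂ) z := by
  rw [← Complex.ofReal_pow, Complex.mul_conj, Complex.normSq_eq_norm_sq]

lemma cre (x : ℂ) : ((x.re : ℝ) : ℂ) = (x + (starRingEnd ℂ) x) / 2 := by
  rw [Complex.add_conj]; push_cast; ring

lemma key_pointwise (A A' B B' w u e : ℂ) (s t : ℝ)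
    (hw : w * (starRingEnd ℂ) w = 1)
    (hu : u = (starRingEnd ℂ) w * (starRingEnd ℂ) w)
    (hs : s = 1 ∨ s = -1) (ht : t = 1 ∨ t = -1) (he : e = 1 ∨ e = -1) :
    ((1/2) * ‖(A + (s:ℂ)*w*(starRingEnd ℂ) A') * (B + (t:ℂ)*w*(starRingEnd ℂ) B')‖^2
     + (1/2) * ‖(A' - (s:ℂ)*w*(starRingEnd ℂ) A) * (B' - (t:ℂ)*w*(starRingEnd ℂ) B)‖^2
     - 2*‖A*B‖^2 - 2*‖A*B'‖^2
     - 2*s*t*((A*A'*(starRingEnd ℂ) (B*B')).re)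
     - 2*s*t*((u*(A*A'*(B*B'))).re))
    + ((1/2) * ‖(A' + (s:ℂ)*(e*w)*(starRingEnd ℂ) A) * (B' + (t:ℂ)*(e*w)*(starRingEnd ℂ) B)‖^2
     + (1/2) * ‖(A - (s:ℂ)*(e*w)*(starRingEnd ℂ) A') * (B - (t:ℂ)*(e*w)*(starRingEnd ℂ) B')‖^2
     - 2*‖A'*B'‖^2 - 2*‖A'*B‖^2
     - 2*s*t*((A'*A*(starRingEnd ℂ) (B'*B)).re)
     - 2*s*t*((u*(A'*A*(B'*B))).re)) = 0 := by
  apply Complex.ofReal_injective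
  push_cast
  rw [cnorm, cnorm, cnorm, cnorm, cnorm, cnorm, cnorm, cnorm, cre, cre, cre, cre]
  subst hu
  rcases hs with rfl | rfl <;> rcases ht with rfl | rfl <;> rcases he with rfl | rfl
  · simp only [map_mul, map_add, map_sub, map_one, map_neg, Complex.conj_conj,
      Complex.conj_ofReal, Complex.ofReal_one, Complex.ofReal_neg]
    linear_combination (2*B*B'*(starRingEnd ℂ A)*(starRingEnd ℂ A') + A'*B'*(starRingEnd ℂ A')*(starRingEnd ℂ B') + A'*B'*(starRingEnd ℂ A')*(starRingEnd ℂ B')*w*(starRingEnd ℂ w) + 2*A'*B*(starRingEnd ℂ A')*(starRingEnd ℂ B) + 2*A*B'*(starRingEnd ℂ A)*(starRingEnd ℂ B') + A*B*(starRingEnd ℂ A)*(starRingEnd ℂ B) + A*B*(starRingEnd ℂ A)*(starRingEnd ℂ B)*w*(starRingEnd ℂ w) + 2*A*A'*(starRingEnd ℂ B)*(starRingEnd ℂ B')) * hw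
  · simp only [map_mul, map_add, map_sub, map_one, map_neg, Complex.conj_conj,
      Complex.conj_ofReal, Complex.ofReal_one, Complex.ofReal_neg]
    linear_combination (B'*(starRingEnd ℂ A)*(starRingEnd ℂ A')*(starRingEnd ℂ B')*w + (-1)*B*(starRingEnd ℂ A)*(starRingEnd ℂ A')*(starRingEnd ℂ B)*w + 2*B*B'*(starRingEnd ℂ A)*(starRingEnd ℂ A') + A'*(starRingEnd ℂ A')*(starRingEnd ℂ B)*(starRingEnd ℂ B')*w + A'*B'*(starRingEnd ℂ A')*(starRingEnd ℂ B') + A'*B'*(starRingEnd ℂ A')*(starRingEnd ℂ B')*w*(starRingEnd ℂ w) + 2*A'*B*(starRingEnd ℂ A')*(starRingEnd ℂ B) + A'*B*B'*(starRingEnd ℂ A')*(starRingEnd ℂ w) + (-1)*A*(starRingEnd ℂ A)*(starRingEnd ℂ B)*(starRingEnd ℂ B')*w + 2*A*B'*(starRingEnd ℂ A)*(starRingEnd ℂ B') + A*B*(starRingEnd ℂ A)*(starRingEnd ℂ B) + A*B*(starRingEnd ℂ A)*(starRingEnd ℂ B)*w*(starRingEnd ℂ w) + (-1)*A*B*B'*(starRingEnd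 ℂ A)*(starRingEnd ℂ w) + 2*A*A'*(starRingEnd ℂ B)*(starRingEnd ℂ B') + A*A'*B'*(starRingEnd ℂ B')*(starRingEnd ℂ w) + (-1)*A*A'*B*(starRingEnd ℂ B)*(starRingEnd ℂ w)) * hw
  · simp only [map_mul, map_add, map_sub, map_one, map_neg, Complex.conj_conj,
      Complex.conj_ofReal, Complex.ofReal_one, Complex.ofReal_neg]
    linear_combination ((-2)*B*B'*(starRingEnd ℂ A)*(starRingEnd ℂ A') + A'*B'*(starRingEnd ℂ A')*(starRingEnd ℂ B') + A'*B'*(starRingEnd ℂ A')*(starRingEnd ℂ B')*w*(starRingEnd ℂ w) + 2*A'*B*(starRingEnd ℂ A')*(starRingEnd ℂ B) + 2*A*B'*(starRingEnd ℂ A)*(starRingEnd ℂ B') + A*B*(starRingEnd ℂ A)*(starRingEnd ℂ B) + A*B*(starRingEnd ℂ A)*(starRingEnd ℂ B)*w*(starRingEnd ℂ w) + (-2)*A*A'*(starRingEnd ℂ B)*(starRingEnd ℂ B')) * hw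
  · simp only [map_mul, map_add, map_sub, map_one, map_neg, Complex.conj_conj,
      Complex.conj_ofReal, Complex.ofReal_one, Complex.ofReal_neg]
    linear_combination (B'*(starRingEnd ℂ A)*(starRingEnd ℂ A')*(starRingEnd ℂ B')*w + (-1)*B*(starRingEnd ℂ A)*(starRingEnd ℂ A')*(starRingEnd ℂ B)*w + (-2)*B*B'*(starRingEnd ℂ A)*(starRingEnd ℂ A') + (-1)*A'*(starRingEnd ℂ A')*(starRingEnd ℂ B)*(starRingEnd ℂ B')*w + A'*B'*(starRingEnd ℂ A')*(starRingEnd ℂ B') + A'*B'*(starRingEnd ℂ A')*(starRingEnd ℂ B')*w*(starRingEnd ℂ w) + 2*A'*B*(starRingEnd ℂ A')*(starRingEnd ℂ B) + (-1)*A'*B*B'*(starRingEnd ℂ A')*(starRingEnd ℂ w) + A*(starRingEnd ℂ A)*(starRingEnd ℂ B)*(starRingEnd ℂ B')*w + 2*A*B'*(starRingEnd ℂ A)*(starRingEnd ℂ B') + A*B*(starRingEnd ℂ A)*(starRingEnd ℂ B) + A*B*(starRingEnd ℂ A)*(starRingEnd ℂ B)*w*(starRingEnd ℂ w) + A*B*B'*(starRingEnd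 ℂ A)*(starRingEnd ℂ w) + (-2)*A*A'*(starRingEnd ℂ B)*(starRingEnd ℂ B') + A*A'*B'*(starRingEnd ℂ B')*(starRingEnd ℂ w) + (-1)*A*A'*B*(starRingEnd ℂ B)*(starRingEnd ℂ w)) * hw
  · simp only [map_mul, map_add, map_sub, map_one, map_neg, Complex.conj_conj,
      Complex.conj_ofReal, Complex.ofReal_one, Complex.ofReal_neg]
    linear_combination ((-2)*B*B'*(starRingEnd ℂ A)*(starRingEnd ℂ A') + A'*B'*(starRingEnd ℂ A')*(starRingEnd ℂ B') + A'*B'*(starRingEnd ℂ A')*(starRingEnd ℂ B')*w*(starRingEnd ℂ w) + 2*A'*B*(starRingEnd ℂ A')*(starRingEnd ℂ B) + 2*A*B'*(starRingEnd ℂ A)*(starRingEnd ℂ B') + A*B*(starRingEnd ℂ A)*(starRingEnd ℂ B) + A*B*(starRingEnd ℂ A)*(starRingEnd ℂ B)*w*(starRingEnd ℂ w) + (-2)*A*A'*(starRingEnd ℂ B)*(starRingEnd ℂ B')) * hw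
  · simp only [map_mul, map_add, map_sub, map_one, map_neg, Complex.conj_conj,
      Complex.conj_ofReal, Complex.ofReal_one, Complex.ofReal_neg]
    linear_combination ((-1)*B'*(starRingEnd ℂ A)*(starRingEnd ℂ A')*(starRingEnd ℂ B')*w + B*(starRingEnd ℂ A)*(starRingEnd ℂ A')*(starRingEnd ℂ B)*w + (-2)*B*B'*(starRingEnd ℂ A)*(starRingEnd ℂ A') + A'*(starRingEnd ℂ A')*(starRingEnd ℂ B)*(starRingEnd ℂ B')*w + A'*B'*(starRingEnd ℂ A')*(starRingEnd ℂ B') + A'*B'*(starRingEnd ℂ A')*(starRingEnd ℂ B')*w*(starRingEnd ℂ w) + 2*A'*B*(starRingEnd ℂ A')*(starRingEnd ℂ B) + A'*B*B'*(starRingEnd ℂ A')*(starRingEnd ℂ w) + (-1)*A*(starRingEnd ℂ A)*(starRingEnd ℂ B)*(starRingEnd ℂ B')*w + 2*A*B'*(starRingEnd ℂ A)*(starRingEnd ℂ B') + A*B*(starRingEnd ℂ A)*(starRingEnd ℂ B) + A*B*(starRingEnd ℂ A)*(starRingEnd ℂ B)*w*(starRingEnd ℂ w) + (-1)*A*B*B'*(starRingEnd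 ℂ A)*(starRingEnd ℂ w) + (-2)*A*A'*(starRingEnd ℂ B)*(starRingEnd ℂ B') + (-1)*A*A'*B'*(starRingEnd ℂ B')*(starRingEnd ℂ w) + A*A'*B*(starRingEnd ℂ B)*(starRingEnd ℂ w)) * hw
  · simp only [map_mul, map_add, map_sub, map_one, map_neg, Complex.conj_conj,
      Complex.conj_ofReal, Complex.ofReal_one, Complex.ofReal_neg]
    linear_combination (2*B*B'*(starRingEnd ℂ A)*(starRingEnd ℂ A') + A'*B'*(starRingEnd ℂ A')*(starRingEnd ℂ B') + A'*B'*(starRingEnd ℂ A')*(starRingEnd ℂ B')*w*(starRingEnd ℂ w) + 2*A'*B*(starRingEnd ℂ A')*(starRingEnd ℂ B) + 2*A*B'*(starRingEnd ℂ A)*(starRingEnd ℂ B') + A*B*(starRingEnd ℂ A)*(starRingEnd ℂ B) + A*B*(starRingEnd ℂ A)*(starRingEnd ℂ B)*w*(starRingEnd ℂ w) + 2*A*A'*(starRingEnd ℂ B)*(starRingEnd ℂ B')) * hw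
  · simp only [map_mul, map_add, map_sub, map_one, map_neg, Complex.conj_conj,
      Complex.conj_ofReal, Complex.ofReal_one, Complex.ofReal_neg]
    linear_combination ((-1)*B'*(starRingEnd ℂ A)*(starRingEnd ℂ A')*(starRingEnd ℂ B')*w + B*(starRingEnd ℂ A)*(starRingEnd ℂ A')*(starRingEnd ℂ B)*w + 2*B*B'*(starRingEnd ℂ A)*(starRingEnd ℂ A') + (-1)*A'*(starRingEnd ℂ A')*(starRingEnd ℂ B)*(starRingEnd ℂ B')*w + A'*B'*(starRingEnd ℂ A')*(starRingEnd ℂ B') + A'*B'*(starRingEnd ℂ A')*(starRingEnd ℂ B')*w*(starRingEnd ℂ w) + 2*A'*B*(starRingEnd ℂ A')*(starRingEnd ℂ B) + (-1)*A'*B*B'*(starRingEnd ℂ A')*(starRingEnd ℂ w) + A*(starRingEnd ℂ A)*(starRingEnd ℂ B)*(starRingEnd ℂ B')*w + 2*A*B'*(starRingEnd ℂ A)*(starRingEnd ℂ B') + A*B*(starRingEnd ℂ A)*(starRingEnd ℂ B) + A*B*(starRingEnd ℂ A)*(starRingEnd ℂ B)*w*(starRingEnd ℂ w) + A*B*B'*(starRingEnd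 ℂ A)*(starRingEnd ℂ w) + 2*A*A'*(starRingEnd ℂ B)*(starRingEnd ℂ B') + (-1)*A*A'*B'*(starRingEnd ℂ B')*(starRingEnd ℂ w) + A*A'*B*(starRingEnd ℂ B)*(starRingEnd ℂ w)) * hw

lemma combo_integral (f1 f2 f3 f4 f5 f6 : ℝ → ℝ) (c1 c2 c3 c4 c5 c6 x y : ℝ)
    (h1 : Continuous f1) (h2 : Continuous f2) (h3 : Continuous f3)
    (h4 : Continuous f4) (h5 : Continuous f5) (h6 : Continuous f6) :
    (∫ θ in x..y, (c1 * f1 θ + c2 * f2 θ - c3 * f3 θ - c4 * f4 θ - c5 * f5 θ - c6 * f6 θ))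
    = c1 * (∫ θ in x..y, f1 θ) + c2 * (∫ θ in x..y, f2 θ) - c3 * (∫ θ in x..y, f3 θ)
      - c4 * (∫ θ in x..y, f4 θ) - c5 * (∫ θ in x..y, f5 θ) - c6 * (∫ θ in x..y, f6 θ) := by
  have i : ∀ (c : ℝ) (f : ℝ → ℝ), Continuous f →
      IntervalIntegrable (fun θ => c * f θ) MeasureTheory.volume x y :=
    fun c f hf => (continuous_const.mul hf).intervalIntegrable _ _
  have i1 := i c1 f1 h1
  have i2 := i c2 f2 h2
  have i3 := i c3 f3 h3
  have i4 := i c4 f4 h4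
  have i5 := i c5 f5 h5
  have i6 := i c6 f6 h6
  rw [intervalIntegral.integral_sub ((((i1.add i2).sub i3).sub i4).sub i5) i6,
    intervalIntegral.integral_sub (((i1.add i2).sub i3).sub i4) i5,
    intervalIntegral.integral_sub ((i1.add i2).sub i3) i4,
    intervalIntegral.integral_sub (i1.add i2) i3,
    intervalIntegral.integral_add i1 i2,
    intervalIntegral.integral_const_mul, intervalIntegral.integral_const_mul,
    intervalIntegral.integral_const_mul, intervalIntegral.integral_const_mul,
    intervalIntegral.integral_const_mul, intervalIntegral.integral_const_mul]

/-- Technical lemma: expansion of the combination of squared L² norms appearing in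
the Rudin-Shapiro-like recursion, for Laurent polynomials a, b. -/
theorem technical_norm_identity (a b : ℤ →₀ ℂ) (k : ℤ) (σ τ : ℝ)
    (hσ : σ = 1 ∨ σ = -1) (hτ : τ = 1 ∨ τ = -1) :
    (1/2) * ((1 / (2 * Real.pi)) * ∫ θ in (0:ℝ)..(2 * Real.pi),
        ‖(evalL a (circ θ) + (σ : ℂ) * (circ θ) ^ k * (starRingEnd ℂ) (evalL a (-(circ θ)))) *
          (evalL b (circ θ) + (τ : ℂ) * (circ θ) ^ k * (starRingEnd ℂ) (evalL b (-(circ θ))))‖ ^ 2)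
    + (1/2) * ((1 / (2 * Real.pi)) * ∫ θ in (0:ℝ)..(2 * Real.pi),
        ‖(evalL a (-(circ θ)) - (σ : ℂ) * (circ θ) ^ k * (starRingEnd ℂ) (evalL a (circ θ))) *
          (evalL b (-(circ θ)) - (τ : ℂ) * (circ θ) ^ k * (starRingEnd ℂ) (evalL b (circ θ)))‖ ^ 2)
    = 2 * ((1 / (2 * Real.pi)) * ∫ θ in (0:ℝ)..(2 * Real.pi),
          ‖evalL a (circ θ) * evalL b (circ θ)‖ ^ 2)
      + 2 * ((1 / (2 * Real.pi)) * ∫ θ in (0:ℝ)..(2 * Real.pi),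
          ‖evalL a (circ θ) * evalL b (-(circ θ))‖ ^ 2)
      + 2 * σ * τ * ((1 / (2 * Real.pi)) * (∫ θ in (0:ℝ)..(2 * Real.pi),
          evalL a (circ θ) * evalL a (-(circ θ)) *
            (starRingEnd ℂ) (evalL b (circ θ) * evalL b (-(circ θ)))).re)
      + 2 * σ * τ * ((1 / (2 * Real.pi)) * (∫ θ in (0:ℝ)..(2 * Real.pi),
          (circ θ) ^ (-(2 * k)) * (evalL a (circ θ) * evalL a (-(circ θ)) *
            (evalL b (circ θ) * evalL b (-(circ θ))))).re) := by
  have hca := cont_evalL a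
  have hca' := cont_evalL_neg a
  have hcb := cont_evalL b
  have hcb' := cont_evalL_neg b
  have hcw := cont_circ_zpow k
  have hcu := cont_circ_zpow (-(2 * k))
  have hc1 : Continuous fun θ : ℝ => ‖(evalL a (circ θ) + (σ : ℂ) * circ θ ^ k * (starRingEnd ℂ) (evalL a (-(circ θ)))) * (evalL b (circ θ) + (τ : ℂ) * circ θ ^ k * (starRingEnd ℂ) (evalL b (-(circ θ))))‖ ^ 2 := by
    simp only [starRingEnd_apply]; fun_prop
  have hc2 : Continuous fun θ : ℝ => ‖(evalL a (-(circ θ)) - (σ : ℂ) * circ θ ^ k * (starRingEnd ℂ) (evalL a (circ θ))) * (evalL b (-(circ θ)) - (τ : ℂ) * circ θ ^ k * (starRingEnd ℂ) (evalL b (circ θ)))‖ ^ 2 := by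
    simp only [starRingEnd_apply]; fun_prop
  have hc3 : Continuous fun θ : ℝ => ‖evalL a (circ θ) * evalL b (circ θ)‖ ^ 2 := by fun_prop
  have hc4 : Continuous fun θ : ℝ => ‖evalL a (circ θ) * evalL b (-(circ θ))‖ ^ 2 := by fun_prop
  have hc5c : Continuous fun θ : ℝ => evalL a (circ θ) * evalL a (-(circ θ)) *
      (starRingEnd ℂ) (evalL b (circ θ) * evalL b (-(circ θ))) := by
    simp only [starRingEnd_apply]; fun_prop
  have hc6c : Continuous fun θ : ℝ => circ θ ^ (-(2 * k)) * (evalL a (circ θ) * evalL a (-(circ θ)) *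
      (evalL b (circ θ) * evalL b (-(circ θ)))) := by fun_prop
  have hc5 : Continuous fun θ : ℝ => (evalL a (circ θ) * evalL a (-(circ θ)) * (starRingEnd ℂ) (evalL b (circ θ) * evalL b (-(circ θ)))).re := Complex.continuous_re.comp hc5c
  have hc6 : Continuous fun θ : ℝ => (circ θ ^ (-(2 * k)) * (evalL a (circ θ) * evalL a (-(circ θ)) * (evalL b (circ θ) * evalL b (-(circ θ))))).re := Complex.continuous_re.comp hc6c
  have hGzero : ∀ θ : ℝ, (1/2 * (‖(evalL a (circ θ) + (σ : ℂ) * circ θ ^ k * (starRingEnd ℂ) (evalL a (-(circ θ)))) * (evalL b (circ θ) + (τ : ℂ) * circ θ ^ k * (starRingEnd ℂ) (evalL b (-(circ θ))))‖ ^ 2) + 1/2 * (‖(evalL a (-(circ θ)) - (σ : ℂ) * circ θ ^ k * (starRingEnd ℂ) (evalL a (circ θ))) * (evalL b (-(circ θ)) - (τ : ℂ) * circ θ ^ k * (starRingEnd ℂ) (evalL b (circ θ)))‖ ^ 2) - 2 * (‖evalL a (circ θ) * evalL b (circ θ)‖ ^ 2) - 2 * (‖evalL a (circ θ) * evalL b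 (-(circ θ))‖ ^ 2) - 2*σ*τ * ((evalL a (circ θ) * evalL a (-(circ θ)) * (starRingEnd ℂ) (evalL b (circ θ) * evalL b (-(circ θ)))).re) - 2*σ*τ * ((circ θ ^ (-(2 * k)) * (evalL a (circ θ) * evalL a (-(circ θ)) * (evalL b (circ θ) * evalL b (-(circ θ))))).re)) + (1/2 * (‖(evalL a (circ (θ + Real.pi)) + (σ : ℂ) * circ (θ + Real.pi) ^ k * (starRingEnd ℂ) (evalL a (-(circ (θ + Real.pi))))) * (evalL b (circ (θ + Real.pi)) + (τ : ℂ) * circ (θ + Real.pi) ^ k * (starRingEnd ℂ) (evalL b (-(circ (θ + Real.pi)))))‖ ^ 2) + 1/2 * (‖(evalL a (-(circ (θ + Real.pi))) - (σ : ℂ) * circ (θ + Real.pi) ^ k * (starRingEnd ℂ) (evalL a (circ (θ + Real.pi)))) * (evalL b (-(circ (θ + Real.pi))) - (τ : ℂ) * circ (θ + Real.pi) ^ k * (starRingEnd ℂ) (evalL b (circ (θ + Real.pi))))‖ ^ 2) - 2 * (‖evalL a (circ (θ + Real.pi)) * evalL b (circ (θ + Real.pi))‖ ^ 2) - 2 *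 (‖evalL a (circ (θ + Real.pi)) * evalL b (-(circ (θ + Real.pi)))‖ ^ 2) - 2*σ*τ * ((evalL a (circ (θ + Real.pi)) * evalL a (-(circ (θ + Real.pi))) * (starRingEnd ℂ) (evalL b (circ (θ + Real.pi)) * evalL b (-(circ (θ + Real.pi))))).re) - 2*σ*τ * ((circ (θ + Real.pi) ^ (-(2 * k)) * (evalL a (circ (θ + Real.pi)) * evalL a (-(circ (θ + Real.pi))) * (evalL b (circ (θ + Real.pi)) * evalL b (-(circ (θ + Real.pi)))))).re)) = 0 := by
    intro θ
    have hw := circ_zpow_mul_conj θ k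
    have hcwi : (starRingEnd ℂ) (circ θ ^ k) = (circ θ ^ k)⁻¹ := eq_inv_of_mul_eq_one_right hw
    have hu : circ θ ^ (-(2 * k)) = (starRingEnd ℂ) (circ θ ^ k) * (starRingEnd ℂ) (circ θ ^ k) := by
      rw [hcwi, ← zpow_neg, ← zpow_add₀ (circ_ne θ), show -k + -k = -(2 * k) by ring]
    have he : ((-1 : ℂ)) ^ k = 1 ∨ ((-1 : ℂ)) ^ k = -1 :=
      (Int.even_or_odd k).imp (fun h => h.neg_one_zpow) (fun h => h.neg_one_zpow)
    have hm1 : ((-1 : ℂ)) ^ (-(2 * k)) = 1 :=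
      Even.neg_one_zpow ⟨-k, by ring⟩
    simp only [circ_pi, neg_neg]
    rw [show ((-(circ θ)) ^ k) = ((-1 : ℂ)) ^ k * circ θ ^ k by rw [← neg_one_mul, mul_zpow],
      show ((-(circ θ)) ^ (-(2 * k))) = circ θ ^ (-(2 * k)) by
        rw [← neg_one_mul, mul_zpow, hm1, one_mul]]
    linear_combination key_pointwise (evalL a (circ θ)) (evalL a (-(circ θ)))
      (evalL b (circ θ)) (evalL b (-(circ θ))) (circ θ ^ k) (circ θ ^ (-(2 * k)))
      (((-1 : ℂ)) ^ k) σ τ hw hu hσ hτ he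
  have hG0 : (∫ θ in (0:ℝ)..(2 * Real.pi), (1/2 * (‖(evalL a (circ θ) + (σ : ℂ) * circ θ ^ k * (starRingEnd ℂ) (evalL a (-(circ θ)))) * (evalL b (circ θ) + (τ : ℂ) * circ θ ^ k * (starRingEnd ℂ) (evalL b (-(circ θ))))‖ ^ 2) + 1/2 * (‖(evalL a (-(circ θ)) - (σ : ℂ) * circ θ ^ k * (starRingEnd ℂ) (evalL a (circ θ))) * (evalL b (-(circ θ)) - (τ : ℂ) * circ θ ^ k * (starRingEnd ℂ) (evalL b (circ θ)))‖ ^ 2) - 2 * (‖evalL a (circ θ) * evalL b (circ θ)‖ ^ 2) - 2 * (‖evalL a (circ θ) * evalL b (-(circ θ))‖ ^ 2) - 2*σ*τ * ((evalL a (circ θ) * evalL a (-(circ θ)) * (starRingEnd ℂ) (evalL b (circ θ) * evalL b (-(circ θ)))).re) - 2*σ*τ * ((circ θ ^ (-(2 * k)) * (evalL a (circ θ) * evalL a (-(circ θ)) * (evalL b (circ θ) * evalL b (-(circ θ))))).re))) = 0 := by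
    apply integral_zero_of_antiperiodic
    · fun_prop
    · exact hGzero
  have hGeq := combo_integral (fun θ : ℝ => ‖(evalL a (circ θ) + (σ : ℂ) * circ θ ^ k * (starRingEnd ℂ) (evalL a (-(circ θ)))) * (evalL b (circ θ) + (τ : ℂ) * circ θ ^ k * (starRingEnd ℂ) (evalL b (-(circ θ))))‖ ^ 2) (fun θ : ℝ => ‖(evalL a (-(circ θ)) - (σ : ℂ) * circ θ ^ k * (starRingEnd ℂ) (evalL a (circ θ))) * (evalL b (-(circ θ)) - (τ : ℂ) * circ θ ^ k * (starRingEnd ℂ) (evalL b (circ θ)))‖ ^ 2)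
    (fun θ : ℝ => ‖evalL a (circ θ) * evalL b (circ θ)‖ ^ 2) (fun θ : ℝ => ‖evalL a (circ θ) * evalL b (-(circ θ))‖ ^ 2)
    (fun θ : ℝ => (evalL a (circ θ) * evalL a (-(circ θ)) * (starRingEnd ℂ) (evalL b (circ θ) * evalL b (-(circ θ)))).re) (fun θ : ℝ => (circ θ ^ (-(2 * k)) * (evalL a (circ θ) * evalL a (-(circ θ)) * (evalL b (circ θ) * evalL b (-(circ θ))))).re)
    (1/2) (1/2) 2 2 (2*σ*τ) (2*σ*τ) 0 (2 * Real.pi) hc1 hc2 hc3 hc4 hc5 hc6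
  beta_reduce at hGeq
  have hcombo := hGeq.symm.trans hG0
  rw [re_intervalIntegral (hc5c.intervalIntegrable _ _),
    re_intervalIntegral (hc6c.intervalIntegrable _ _)]
  linear_combination (1 / (2 * Real.pi)) * hcombo
end

section
/- Let u_0, v_0, w_0 be real numbers and define (u_{n+1}, v_{n+1}, w_{n+1}) = A(u_n, v_n, w_n) where A is the 3×3 matrix with rows (2,2,2), (2,2,-2), (2,-2,2). Then for all n ≥ 0, u_n = (4^n(2u_0 + v_0 + w_0) + (-2)^n(u_0 - v_0 - w_0))/3. -/
/-- Explicit formula for the first coordinate of iterates of the matrix with rows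
(2,2,2), (2,2,-2), (2,-2,2). -/
theorem matrix_iteration_formula (x : ℕ → Fin 3 → ℝ)
    (hx : ∀ n, x (n + 1) = (!![(2:ℝ), 2, 2; 2, 2, -2; 2, -2, 2]).mulVec (x n)) :
    ∀ n : ℕ, x n 0 = ((4:ℝ) ^ n * (2 * x 0 0 + x 0 1 + x 0 2)
      + (-2 : ℝ) ^ n * (x 0 0 - x 0 1 - x 0 2)) / 3 := by
  have key : ∀ n : ℕ,
      x n 0 = ((4:ℝ) ^ n * (2 * x 0 0 + x 0 1 + x 0 2)
        + (-2 : ℝ) ^ n * (x 0 0 - x 0 1 - x 0 2)) / 3 ∧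
      x n 1 + x n 2 = ((4:ℝ) ^ n * (2 * x 0 0 + x 0 1 + x 0 2)
        - 2 * (-2 : ℝ) ^ n * (x 0 0 - x 0 1 - x 0 2)) / 3 := by
    intro n
    induction n with
    | zero => constructor <;> norm_num <;> ring
    | succ n ih =>
      obtain ⟨h0, h12⟩ := ih
      have e : x (n + 1) = (!![(2:ℝ), 2, 2; 2, 2, -2; 2, -2, 2]).mulVec (x n) := hx n
      have e0 : x (n+1) 0 = 2 * x n 0 + 2 * x n 1 + 2 * x n 2 := by
        rw [e]; simp [Matrix.mulVec, dotProduct, Fin.sum_univ_three]; try ring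
      have e1 : x (n+1) 1 = 2 * x n 0 + 2 * x n 1 - 2 * x n 2 := by
        rw [e]; simp [Matrix.mulVec, dotProduct, Fin.sum_univ_three]; try ring
      have e2 : x (n+1) 2 = 2 * x n 0 - 2 * x n 1 + 2 * x n 2 := by
        rw [e]; simp [Matrix.mulVec, dotProduct, Fin.sum_univ_three]; try ring
      constructor
      · rw [e0]
        have : x n 0 + (x n 1 + x n 2) =
            ((4:ℝ) ^ n * (2 * x 0 0 + x 0 1 + x 0 2)
              + (-2 : ℝ) ^ n * (x 0 0 - x 0 1 - x 0 2)) / 3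
            + ((4:ℝ) ^ n * (2 * x 0 0 + x 0 1 + x 0 2)
              - 2 * (-2 : ℝ) ^ n * (x 0 0 - x 0 1 - x 0 2)) / 3 := by rw [h0, h12]
        rw [pow_succ, pow_succ]; nlinarith [this]
      · rw [e1, e2, pow_succ, pow_succ]
        nlinarith [h0, h12]
  exact fun n => (key n).1
end

section
/- Let f_0, g_0 ∈ C[z] be nonzero polynomials of equal length with nonzero constant coefficients, let σ_0, σ_1, ... ∈ {-1,1}, and define recursively f_{n+1}(z) = f_n(z) + σ_n z^{len f_n} f_n†(-z) and g_{n+1}(z) = g_n(z) + σ_n z^{len g_n} g_n†(-z). Then for all n, ‖f_n g_n‖_2^2 / (‖f_n‖_2^2 ‖g_n‖_2^2) = [2‖f_0 g_0‖_2^2 + ‖f_0 g_0~‖_2^2 + Re ∫ f_0 f_0~ conj(g_0 g_0~)]/(3‖f_0‖_2^2‖g_0‖_2^2) + (-1/2)^n · [‖f_0 g_0‖_2^2 - ‖f_0 g_0~‖_2^2 - Re ∫ f_0 f_0~ conj(g_0 g_0~)]/(3‖f_0‖_2^2‖g_0‖_2^2). -/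
noncomputable def dagger (f : Polynomial ℂ) : Polynomial ℂ :=
  ∑ j ∈ Finset.range (f.natDegree + 1),
    Polynomial.C ((starRingEnd ℂ) (f.coeff (f.natDegree - j))) * Polynomial.X ^ j

noncomputable def n2 (f : Polynomial ℂ) : ℝ :=
  (1 / (2 * Real.pi)) * ∫ θ in (0:ℝ)..(2 * Real.pi), ‖f.eval (circ θ)‖ ^ 2

noncomputable def uu (f g : Polynomial ℂ) : ℝ :=
  (1 / (2 * Real.pi)) * ∫ θ in (0:ℝ)..(2 * Real.pi), ‖f.eval (circ θ) * g.eval (circ θ)‖ ^ 2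

noncomputable def vv (f g : Polynomial ℂ) : ℝ :=
  (1 / (2 * Real.pi)) * ∫ θ in (0:ℝ)..(2 * Real.pi), ‖f.eval (circ θ) * g.eval (-(circ θ))‖ ^ 2

noncomputable def ww (f g : Polynomial ℂ) : ℝ :=
  (1 / (2 * Real.pi)) * (∫ θ in (0:ℝ)..(2 * Real.pi),
    f.eval (circ θ) * f.eval (-(circ θ)) *
      (starRingEnd ℂ) (g.eval (circ θ) * g.eval (-(circ θ)))).re



lemma circ_cont : Continuous circ := by
  unfold circ; fun_prop

lemma circ_mul_conj (θ : ℝ) : circ θ * (starRingEnd ℂ) (circ θ) = 1 := by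
  unfold circ
  rw [← Complex.exp_conj]
  rw [← Complex.exp_add]
  simp [Complex.ext_iff]

lemma expI_int (k : ℤ) (hk : k ≠ 0) :
    (∫ θ in (0:ℝ)..(2*Real.pi), Complex.exp ((k * Complex.I) * θ)) = 0 := by
  rw [integral_exp_mul_complex (by simp [Complex.I_ne_zero, hk])]
  have : Complex.exp ((k*Complex.I) * (2*Real.pi)) = 1 := by
    rw [show ((k:ℂ)*Complex.I) * (2*Real.pi) = (k:ℤ) * (2*Real.pi*Complex.I) by push_cast; ring]
    exact Complex.exp_int_mul_two_pi_mul_I k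
  simp [this]

lemma circ_pow_conj_pow (θ : ℝ) (j k : ℕ) :
    circ θ ^ j * (starRingEnd ℂ) (circ θ) ^ k
      = Complex.exp ((((j:ℤ) - k) * Complex.I) * θ) := by
  unfold circ
  rw [← Complex.exp_conj, ← Complex.exp_nat_mul, ← Complex.exp_nat_mul, ← Complex.exp_add]
  congr 1
  simp [Complex.ext_iff]
  ring

lemma base_orth (j k : ℕ) :
    (∫ θ in (0:ℝ)..(2*Real.pi), circ θ ^ j * (starRingEnd ℂ) (circ θ) ^ k)
      = if j = k then (2*Real.pi : ℂ) else 0 := by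
  simp only [circ_pow_conj_pow]
  by_cases h : j = k
  · subst h; simp
  · rw [if_neg h, ← expI_int ((j:ℤ) - k) (by omega)]
    norm_num

noncomputable def ip (P Q : Polynomial ℂ) : ℂ :=
  ∑ k ∈ P.support, P.coeff k * (starRingEnd ℂ) (Q.coeff k)

lemma ip_eq_range {P : Polynomial ℂ} (Q : Polynomial ℂ) {N : ℕ} (h : P.natDegree < N) :
    ip P Q = ∑ k ∈ Finset.range N, P.coeff k * (starRingEnd ℂ) (Q.coeff k) := by
  apply Finset.sum_subset
  · intro k hk
    simp only [Finset.mem_range]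
    exact lt_of_le_of_lt (Polynomial.le_natDegree_of_mem_supp k hk) h
  · intro k _ hk
    simp [Polynomial.notMem_support_iff.mp hk]

lemma poly_eval_circ_cont (P : Polynomial ℂ) : Continuous (fun θ => P.eval (circ θ)) :=
  P.continuous.comp circ_cont

lemma parseval (P Q : Polynomial ℂ) :
    (∫ θ in (0:ℝ)..(2*Real.pi), P.eval (circ θ) * (starRingEnd ℂ) (Q.eval (circ θ)))
      = (2*Real.pi : ℂ) * ip P Q := by
  set N := max P.natDegree Q.natDegree + 1 with hN
  have hPN : P.natDegree < N := by omega
  have hQN : Q.natDegree < N := by omega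
  have contjk : ∀ j k : ℕ, Continuous (fun θ : ℝ =>
      (P.coeff j * (starRingEnd ℂ) (Q.coeff k)) * (circ θ ^ j * (starRingEnd ℂ) (circ θ) ^ k)) := by
    intro j k
    exact continuous_const.mul ((circ_cont.pow j).mul ((Complex.continuous_conj.comp circ_cont).pow k))
  have key : ∀ θ : ℝ, P.eval (circ θ) * (starRingEnd ℂ) (Q.eval (circ θ))
      = ∑ j ∈ Finset.range N, ∑ k ∈ Finset.range N,
          (P.coeff j * (starRingEnd ℂ) (Q.coeff k)) * (circ θ ^ j * (starRingEnd ℂ) (circ θ) ^ k) := by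
    intro θ
    rw [Polynomial.eval_eq_sum_range' hPN, Polynomial.eval_eq_sum_range' hQN]
    rw [map_sum, Finset.sum_mul_sum]
    apply Finset.sum_congr rfl; intro j _
    apply Finset.sum_congr rfl; intro k _
    simp only [map_mul, map_pow]
    ring
  simp only [key]
  rw [intervalIntegral.integral_finset_sum (fun j _ =>
    (continuous_finset_sum _ (fun k _ => contjk j k)).intervalIntegrable _ _)]
  have inner : ∀ j, j ∈ Finset.range N → (∫ θ in (0:ℝ)..(2*Real.pi),
      ∑ k ∈ Finset.range N, (P.coeff j * (starRingEnd ℂ) (Q.coeff k)) * (circ θ ^ j * (starRingEnd ℂ) (circ θ) ^ k))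
      = (2*Real.pi : ℂ) * (P.coeff j * (starRingEnd ℂ) (Q.coeff j)) := by
    intro j hj
    rw [intervalIntegral.integral_finset_sum (fun k _ => (contjk j k).intervalIntegrable _ _)]
    have term : ∀ k, k ∈ Finset.range N → (∫ θ in (0:ℝ)..(2*Real.pi),
        (P.coeff j * (starRingEnd ℂ) (Q.coeff k)) * (circ θ ^ j * (starRingEnd ℂ) (circ θ) ^ k))
        = if k = j then (2*Real.pi:ℂ) * (P.coeff j * (starRingEnd ℂ) (Q.coeff j)) else 0 := by
      intro k _
      rw [intervalIntegral.integral_const_mul, base_orth]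
      by_cases h : k = j
      · subst h; simp; ring
      · rw [if_neg (fun hh => h hh.symm), if_neg h, mul_zero]
    rw [Finset.sum_congr rfl term, Finset.sum_ite_eq' (Finset.range N) j
        (fun _ => (2*Real.pi:ℂ) * (P.coeff j * (starRingEnd ℂ) (Q.coeff j))), if_pos hj]
  rw [Finset.sum_congr rfl inner, ← Finset.mul_sum, ip_eq_range Q hPN]

lemma coeff_comp_neg_X (P : Polynomial ℂ) (k : ℕ) :
    (P.comp (-Polynomial.X)).coeff k = (-1)^k * P.coeff k := by
  induction P using Polynomial.induction_on' with
  | add p q hp hq => simp [hp, hq, mul_add]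
  | monomial n a =>
    rw [Polynomial.monomial_comp]
    rw [show ((-Polynomial.X : Polynomial ℂ))^n = Polynomial.C ((-1:ℂ)^n) * Polynomial.X^n by
      rw [neg_pow]; simp [Polynomial.C_pow]]
    rw [← mul_assoc, ← Polynomial.C_mul, Polynomial.coeff_C_mul_X_pow]
    rw [Polynomial.coeff_monomial]
    by_cases h : k = n
    · subst h; simp [mul_comm]
    · simp [h, Ne.symm h]

lemma natDegree_comp_neg_X_le (P : Polynomial ℂ) :
    (P.comp (-Polynomial.X)).natDegree ≤ P.natDegree := by
  refine le_trans (Polynomial.natDegree_comp_le) ?_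
  simp

lemma ip_comm (P Q : Polynomial ℂ) : ip P Q = (starRingEnd ℂ) (ip Q P) := by
  have h := max P.natDegree Q.natDegree
  rw [ip_eq_range Q (lt_of_le_of_lt (le_max_left P.natDegree Q.natDegree) (Nat.lt_succ_self _)),
      ip_eq_range P (lt_of_le_of_lt (le_max_right P.natDegree Q.natDegree) (Nat.lt_succ_self _))]
  rw [map_sum]
  apply Finset.sum_congr rfl
  intro k _
  simp [mul_comm]

lemma ip_add_left (P Q R : Polynomial ℂ) : ip (P + Q) R = ip P R + ip Q R := by
  set N := max (P+Q).natDegree (max P.natDegree Q.natDegree) + 1 with hN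
  rw [ip_eq_range R (show (P+Q).natDegree < N by omega),
      ip_eq_range R (show P.natDegree < N by omega),
      ip_eq_range R (show Q.natDegree < N by omega), ← Finset.sum_add_distrib]
  apply Finset.sum_congr rfl
  intro k _
  rw [Polynomial.coeff_add]; ring

lemma ip_add_right (P Q R : Polynomial ℂ) : ip P (Q + R) = ip P Q + ip P R := by
  rw [ip_comm, ip_add_left, map_add, ← ip_comm, ← ip_comm]

lemma ip_C_mul_left (a : ℂ) (P Q : Polynomial ℂ) : ip (Polynomial.C a * P) Q = a * ip P Q := by
  set N := max (Polynomial.C a * P).natDegree P.natDegree + 1 with hN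
  rw [ip_eq_range Q (show (Polynomial.C a * P).natDegree < N by omega),
      ip_eq_range Q (show P.natDegree < N by omega), Finset.mul_sum]
  apply Finset.sum_congr rfl
  intro k _
  rw [Polynomial.coeff_C_mul]; ring

lemma ip_C_mul_right (a : ℂ) (P Q : Polynomial ℂ) :
    ip P (Polynomial.C a * Q) = (starRingEnd ℂ) a * ip P Q := by
  rw [ip_comm, ip_C_mul_left, map_mul, ← ip_comm]

lemma ip_comp_neg (P Q : Polynomial ℂ) :
    ip (P.comp (-Polynomial.X)) (Q.comp (-Polynomial.X)) = ip P Q := by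
  set N := P.natDegree + 1 with hN
  rw [ip_eq_range _ (lt_of_le_of_lt (natDegree_comp_neg_X_le P) (Nat.lt_succ_self _)),
      ip_eq_range Q (Nat.lt_succ_self _)]
  apply Finset.sum_congr rfl
  intro k _
  rw [coeff_comp_neg_X, coeff_comp_neg_X, map_mul]
  have : (starRingEnd ℂ) ((-1:ℂ)^k) = (-1:ℂ)^k := by
    rw [map_pow]; simp
  rw [this]
  ring_nf
  rw [mul_comm k 2, pow_mul]
  norm_num

lemma coeffXPM (P : Polynomial ℂ) (a k : ℕ) :
    (Polynomial.X^a * P).coeff k = if a ≤ k then P.coeff (k - a) else 0 := by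
  rw [mul_comm, Polynomial.coeff_mul_X_pow']

lemma ip_X_pow_mul (a : ℕ) (P Q : Polynomial ℂ) :
    ip (Polynomial.X^a * P) (Polynomial.X^a * Q) = ip P Q := by
  set N := P.natDegree + 1 with hN
  have hd : (Polynomial.X^a * P).natDegree < a + N := by
    calc (Polynomial.X^a * P).natDegree ≤ (Polynomial.X^a : Polynomial ℂ).natDegree + P.natDegree :=
          Polynomial.natDegree_mul_le
    _ ≤ a + P.natDegree := by simp
    _ < a + N := by omega
  rw [ip_eq_range _ hd]
  have h0 : ∀ k ∈ Finset.Ico 0 a,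
      (Polynomial.X^a * P).coeff k * (starRingEnd ℂ) ((Polynomial.X^a * Q).coeff k) = 0 := by
    intro k hk
    rw [coeffXPM P a k, if_neg (by simp at hk; omega), zero_mul]
  rw [Finset.range_eq_Ico, ← Finset.sum_Ico_consecutive _ (Nat.zero_le a) (Nat.le_add_right a N),
      Finset.sum_eq_zero h0, zero_add, Finset.sum_Ico_eq_sum_range]
  rw [ip_eq_range Q (Nat.lt_succ_self _), hN]
  simp only [Nat.add_sub_cancel_left]
  apply Finset.sum_congr rfl
  intro k _
  rw [coeffXPM P a (a+k), coeffXPM Q a (a+k), if_pos (by omega), if_pos (by omega)]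
  simp

lemma ip_right_X_pow_mul_eq_zero {P : Polynomial ℂ} {a : ℕ} (Q : Polynomial ℂ)
    (h : P.natDegree < a) : ip P (Polynomial.X^a * Q) = 0 := by
  apply Finset.sum_eq_zero
  intro k hk
  have hk' : k ≤ P.natDegree := Polynomial.le_natDegree_of_mem_supp k hk
  rw [coeffXPM Q a k, if_neg (by omega)]
  simp

lemma coeff_dagger (p : Polynomial ℂ) (k : ℕ) :
    (dagger p).coeff k = if k ≤ p.natDegree then (starRingEnd ℂ) (p.coeff (p.natDegree - k)) else 0 := by
  unfold dagger
  rw [Polynomial.finset_sum_coeff]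
  have h1 : ∀ j ∈ Finset.range (p.natDegree + 1),
      (Polynomial.C ((starRingEnd ℂ) (p.coeff (p.natDegree - j))) * Polynomial.X ^ j).coeff k
      = if j = k then (starRingEnd ℂ) (p.coeff (p.natDegree - j)) else 0 := by
    intro j _
    rw [Polynomial.coeff_C_mul, Polynomial.coeff_X_pow]
    by_cases h : j = k
    · subst h; simp
    · rw [if_neg (fun hh => h hh.symm), if_neg h, mul_zero]
  rw [Finset.sum_congr rfl h1, Finset.sum_ite_eq' (Finset.range (p.natDegree+1)) k]
  by_cases hk : k ≤ p.natDegree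
  · rw [if_pos (by simp; omega), if_pos hk]
  · rw [if_neg (by simp; omega), if_neg hk]

lemma natDegree_dagger_le (p : Polynomial ℂ) : (dagger p).natDegree ≤ p.natDegree := by
  rw [Polynomial.natDegree_le_iff_coeff_eq_zero]
  intro m hm
  rw [coeff_dagger, if_neg (by omega)]

lemma dagger_eval (p : Polynomial ℂ) {z : ℂ} (hz : z * (starRingEnd ℂ) z = 1) :
    (dagger p).eval z = z ^ p.natDegree * (starRingEnd ℂ) (p.eval z) := by
  set d := p.natDegree with hd
  have e1 : (dagger p).eval z = ∑ j ∈ Finset.range (d+1),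
      (starRingEnd ℂ) (p.coeff (d - j)) * z ^ j := by
    unfold dagger
    rw [Polynomial.eval_finset_sum]
    apply Finset.sum_congr rfl
    intro j _
    simp [hd]
  have e2 : z ^ d * (starRingEnd ℂ) (p.eval z)
      = ∑ k ∈ Finset.range (d+1), (starRingEnd ℂ) (p.coeff k) * z ^ (d - k) := by
    rw [Polynomial.eval_eq_sum_range, map_sum, Finset.mul_sum]
    apply Finset.sum_congr rfl
    intro k hk
    simp only [Finset.mem_range] at hk
    rw [map_mul, map_pow]
    rw [show z ^ d = z ^ (d-k) * z ^ k by rw [← pow_add]; congr 1; omega]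
    rw [show z ^ (d-k) * z ^ k * ((starRingEnd ℂ) (p.coeff k) * (starRingEnd ℂ) z ^ k)
        = (starRingEnd ℂ) (p.coeff k) * z ^ (d-k) * (z * (starRingEnd ℂ) z) ^ k by ring]
    rw [hz, one_pow, mul_one]
  rw [e1, e2, ← Finset.sum_range_reflect]
  apply Finset.sum_congr rfl
  intro j hj
  simp only [Finset.mem_range] at hj
  rw [show d + 1 - 1 - j = d - j by omega, show d - (d - j) = j by omega]

/-- the "s" polynomial appearing in the recursion -/
noncomputable def sp (p : Polynomial ℂ) : Polynomial ℂ :=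
  Polynomial.X ^ (p.natDegree + 1) * (dagger p).comp (-Polynomial.X)

/-- the "t" polynomial: `sp p` composed with `-X`, up to sign -/
noncomputable def tp (p : Polynomial ℂ) : Polynomial ℂ :=
  Polynomial.X ^ (p.natDegree + 1) * dagger p

lemma sp_eval (p : Polynomial ℂ) {z : ℂ} (hz : z * (starRingEnd ℂ) z = 1) :
    (sp p).eval z = (-1)^p.natDegree * z^(2*p.natDegree+1)
      * (starRingEnd ℂ) ((p.comp (-Polynomial.X)).eval z) := by
  unfold sp
  have hneg : (-z) * (starRingEnd ℂ) (-z) = 1 := by rw [map_neg]; simpa using hz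
  simp only [Polynomial.eval_mul, Polynomial.eval_pow, Polynomial.eval_X, Polynomial.eval_comp,
    Polynomial.eval_neg]
  rw [dagger_eval p hneg]
  rw [neg_pow z p.natDegree]
  rw [show 2*p.natDegree + 1 = (p.natDegree + 1) + p.natDegree by omega, pow_add]
  ring

lemma tp_eval (p : Polynomial ℂ) {z : ℂ} (hz : z * (starRingEnd ℂ) z = 1) :
    (tp p).eval z = z^(2*p.natDegree+1) * (starRingEnd ℂ) (p.eval z) := by
  unfold tp
  simp only [Polynomial.eval_mul, Polynomial.eval_pow, Polynomial.eval_X]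
  rw [dagger_eval p hz, ← mul_assoc, ← pow_add]
  congr 2
  omega

lemma two_pi_ne : (2*Real.pi : ℂ) ≠ 0 := by
  simp [Real.pi_ne_zero, Complex.ext_iff]

lemma bridge_left_s (p A B : Polynomial ℂ) :
    ip (A * sp p) B = (-1)^p.natDegree *
      ip (Polynomial.X^(2*p.natDegree+1) * A) (p.comp (-Polynomial.X) * B) := by
  have h1 := parseval (A * sp p) B
  have h2 := parseval (Polynomial.X^(2*p.natDegree+1) * A) (p.comp (-Polynomial.X) * B)
  have key : ∀ θ : ℝ, (A * sp p).eval (circ θ) * (starRingEnd ℂ) (B.eval (circ θ))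
      = (-1)^p.natDegree * ((Polynomial.X^(2*p.natDegree+1) * A).eval (circ θ)
          * (starRingEnd ℂ) ((p.comp (-Polynomial.X) * B).eval (circ θ))) := by
    intro θ
    simp only [Polynomial.eval_mul, Polynomial.eval_pow, Polynomial.eval_X, map_mul]
    rw [sp_eval p (circ_mul_conj θ)]
    ring
  have : (∫ θ in (0:ℝ)..(2*Real.pi), (A * sp p).eval (circ θ) * (starRingEnd ℂ) (B.eval (circ θ)))
      = (-1:ℂ)^p.natDegree * ∫ θ in (0:ℝ)..(2*Real.pi),
          (Polynomial.X^(2*p.natDegree+1) * A).eval (circ θ)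
          * (starRingEnd ℂ) ((p.comp (-Polynomial.X) * B).eval (circ θ)) := by
    rw [← intervalIntegral.integral_const_mul]
    exact intervalIntegral.integral_congr (fun θ _ => key θ)
  rw [h1, h2] at this
  have := mul_left_cancel₀ two_pi_ne (by rw [this]; ring : (2*Real.pi:ℂ) * ip (A * sp p) B
    = (2*Real.pi:ℂ) * ((-1:ℂ)^p.natDegree * ip (Polynomial.X^(2*p.natDegree+1) * A) (p.comp (-Polynomial.X) * B)))
  exact this

lemma bridge_left_t (p A B : Polynomial ℂ) :
    ip (A * tp p) B = ip (Polynomial.X^(2*p.natDegree+1) * A) (p * B) := by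
  have h1 := parseval (A * tp p) B
  have h2 := parseval (Polynomial.X^(2*p.natDegree+1) * A) (p * B)
  have key : ∀ θ : ℝ, (A * tp p).eval (circ θ) * (starRingEnd ℂ) (B.eval (circ θ))
      = (Polynomial.X^(2*p.natDegree+1) * A).eval (circ θ)
          * (starRingEnd ℂ) ((p * B).eval (circ θ)) := by
    intro θ
    simp only [Polynomial.eval_mul, Polynomial.eval_pow, Polynomial.eval_X, map_mul]
    rw [tp_eval p (circ_mul_conj θ)]
    ring
  have h3 : (∫ θ in (0:ℝ)..(2*Real.pi), (A * tp p).eval (circ θ) * (starRingEnd ℂ) (B.eval (circ θ)))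
      = ∫ θ in (0:ℝ)..(2*Real.pi),
          (Polynomial.X^(2*p.natDegree+1) * A).eval (circ θ)
          * (starRingEnd ℂ) ((p * B).eval (circ θ)) :=
    intervalIntegral.integral_congr (fun θ _ => key θ)
  rw [h1, h2] at h3
  exact mul_left_cancel₀ two_pi_ne h3

lemma conj_neg_one_pow (d : ℕ) : (starRingEnd ℂ) ((-1:ℂ)^d) = (-1:ℂ)^d := by
  rw [map_pow]; simp

lemma bridge_right_s (p A B : Polynomial ℂ) :
    ip A (B * sp p) = (-1)^p.natDegree *
      ip (p.comp (-Polynomial.X) * A) (Polynomial.X^(2*p.natDegree+1) * B) := by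
  rw [ip_comm, bridge_left_s, map_mul, conj_neg_one_pow, ← ip_comm]

lemma bridge_right_t (p A B : Polynomial ℂ) :
    ip A (B * tp p) = ip (p * A) (Polynomial.X^(2*p.natDegree+1) * B) := by
  rw [ip_comm, bridge_left_t, ← ip_comm]

lemma coeff_sp_top (p : Polynomial ℂ) :
    (sp p).coeff (2*p.natDegree+1) = (-1)^p.natDegree * (starRingEnd ℂ) (p.coeff 0) := by
  unfold sp
  rw [coeffXPM, if_pos (by omega), show 2*p.natDegree+1 - (p.natDegree+1) = p.natDegree by omega]
  rw [coeff_comp_neg_X, coeff_dagger, if_pos (le_refl _), Nat.sub_self]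

lemma coeff_sp_zero (p : Polynomial ℂ) : (sp p).coeff 0 = 0 := by
  unfold sp
  rw [coeffXPM, if_neg (by omega)]

lemma natDegree_sp_le (p : Polynomial ℂ) : (sp p).natDegree ≤ 2*p.natDegree + 1 := by
  unfold sp
  calc (Polynomial.X ^ (p.natDegree + 1) * (dagger p).comp (-Polynomial.X)).natDegree
      ≤ (Polynomial.X ^ (p.natDegree + 1) : Polynomial ℂ).natDegree
         + ((dagger p).comp (-Polynomial.X)).natDegree := Polynomial.natDegree_mul_le
    _ ≤ (p.natDegree + 1) + p.natDegree := by
        refine add_le_add (by simp) (le_trans (natDegree_comp_neg_X_le _) (natDegree_dagger_le p))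
    _ = 2*p.natDegree + 1 := by omega

lemma natDegree_sp (p : Polynomial ℂ) (hp : p.coeff 0 ≠ 0) :
    (sp p).natDegree = 2*p.natDegree + 1 := by
  refine le_antisymm (natDegree_sp_le p) ?_
  apply Polynomial.le_natDegree_of_ne_zero
  rw [coeff_sp_top]
  simp [hp]

lemma step_coeff_zero (p : Polynomial ℂ) (a : ℂ) :
    (p + Polynomial.C a * sp p).coeff 0 = p.coeff 0 := by
  rw [Polynomial.coeff_add, Polynomial.coeff_C_mul, coeff_sp_zero, mul_zero, add_zero]

lemma step_natDegree (p : Polynomial ℂ) {a : ℂ} (ha : a ≠ 0) (hp : p.coeff 0 ≠ 0) :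
    (p + Polynomial.C a * sp p).natDegree = 2*p.natDegree + 1 := by
  have h1 : (Polynomial.C a * sp p).natDegree = 2*p.natDegree + 1 := by
    rw [Polynomial.natDegree_C_mul ha, natDegree_sp p hp]
  rw [Polynomial.natDegree_add_eq_right_of_natDegree_lt]
  · exact h1
  · rw [h1]; omega

lemma re_of_two_pi_mul (w : ℂ) : ((2*Real.pi : ℂ) * w).re = 2*Real.pi * w.re := by
  simp [Complex.mul_re]

lemma real_int_eq (P Q : Polynomial ℂ)
    (x : ℝ → ℝ)
    (hx : ∀ θ : ℝ, (x θ : ℂ) = P.eval (circ θ) * (starRingEnd ℂ) (Q.eval (circ θ))) :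
    (∫ θ in (0:ℝ)..(2*Real.pi), x θ) = 2*Real.pi * (ip P Q).re := by
  have h1 : (((∫ θ in (0:ℝ)..(2*Real.pi), x θ) : ℝ) : ℂ)
      = ∫ θ in (0:ℝ)..(2*Real.pi), (x θ : ℂ) := by
    rw [intervalIntegral.integral_ofReal]
  rw [intervalIntegral.integral_congr (fun θ _ => hx θ), parseval] at h1
  have := congrArg Complex.re h1
  rw [Complex.ofReal_re, re_of_two_pi_mul] at this
  exact this

lemma norm_sq_eq (w : ℂ) : ((‖w‖^2 : ℝ) : ℂ) = w * (starRingEnd ℂ) w := by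
  rw [Complex.mul_conj]
  norm_cast
  rw [← Complex.sq_norm]

lemma pi_factor {r : ℝ} : (1 / (2*Real.pi)) * (2*Real.pi * r) = r := by
  have := Real.pi_ne_zero
  field_simp

lemma n2_eq (f : Polynomial ℂ) : n2 f = (ip f f).re := by
  unfold n2
  rw [real_int_eq f f _ (fun θ => norm_sq_eq _), pi_factor]

lemma uu_eq (f g : Polynomial ℂ) : uu f g = (ip (f*g) (f*g)).re := by
  unfold uu
  rw [real_int_eq (f*g) (f*g) _ (fun θ => by
    rw [norm_sq_eq]; simp only [Polynomial.eval_mul]), pi_factor]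

lemma vv_eq (f g : Polynomial ℂ) :
    vv f g = (ip (f * g.comp (-Polynomial.X)) (f * g.comp (-Polynomial.X))).re := by
  unfold vv
  rw [real_int_eq (f * g.comp (-Polynomial.X)) (f * g.comp (-Polynomial.X)) _ (fun θ => by
    rw [norm_sq_eq]
    simp only [Polynomial.eval_mul, Polynomial.eval_comp, Polynomial.eval_neg, Polynomial.eval_X]), pi_factor]

lemma ww_eq (f g : Polynomial ℂ) :
    ww f g = (ip (f * f.comp (-Polynomial.X)) (g * g.comp (-Polynomial.X))).re := by
  unfold ww
  have : (∫ θ in (0:ℝ)..(2*Real.pi),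
      f.eval (circ θ) * f.eval (-(circ θ)) *
        (starRingEnd ℂ) (g.eval (circ θ) * g.eval (-(circ θ))))
      = (2*Real.pi:ℂ) * ip (f * f.comp (-Polynomial.X)) (g * g.comp (-Polynomial.X)) := by
    rw [← parseval]
    apply intervalIntegral.integral_congr
    intro θ _
    simp only [Polynomial.eval_mul, Polynomial.eval_comp, Polynomial.eval_neg, Polynomial.eval_X]
  rw [this, re_of_two_pi_mul, pi_factor]

lemma ip_self_re_pos {f : Polynomial ℂ} (hf : f ≠ 0) : 0 < (ip f f).re := by
  unfold ip
  rw [Complex.re_sum]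
  have hterm : ∀ k : ℕ, (f.coeff k * (starRingEnd ℂ) (f.coeff k)).re = Complex.normSq (f.coeff k) := by
    intro k
    rw [Complex.mul_conj]
    simp
  apply Finset.sum_pos'
  · intro k _
    rw [hterm k]
    exact Complex.normSq_nonneg _
  · obtain ⟨k, hk⟩ := Polynomial.support_nonempty.mpr hf
    exact ⟨k, hk, by rw [hterm k]; exact Complex.normSq_pos.mpr (Polynomial.mem_support_iff.mp hk)⟩

lemma ip_self_re_nonneg (f : Polynomial ℂ) : 0 ≤ (ip f f).re := by
  by_cases hf : f = 0
  · simp [hf, ip]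
  · exact le_of_lt (ip_self_re_pos hf)

lemma neg_one_pow_sq (d : ℕ) : ((-1:ℂ)^d) * ((-1:ℂ)^d) = 1 := by
  rw [← pow_add, show d + d = 2*d by ring, pow_mul, neg_one_sq, one_pow]

lemma comp_neg_neg (p : Polynomial ℂ) :
    (p.comp (-Polynomial.X)).comp (-Polynomial.X) = p := by
  rw [Polynomial.comp_assoc]
  simp

-- G5 : both slots have one `sp`
lemma G5 (p q A B : Polynomial ℂ) (h : p.natDegree = q.natDegree) :
    ip (A * sp p) (B * sp q)
      = ip (q.comp (-Polynomial.X) * A) (p.comp (-Polynomial.X) * B) := by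
  rw [bridge_left_s]
  rw [show p.comp (-Polynomial.X) * (B * sp q) = (p.comp (-Polynomial.X) * B) * sp q by ring]
  rw [bridge_right_s]
  rw [show q.comp (-Polynomial.X) * (Polynomial.X ^ (2 * p.natDegree + 1) * A)
      = Polynomial.X ^ (2 * p.natDegree + 1) * (q.comp (-Polynomial.X) * A) by ring]
  rw [h, ip_X_pow_mul, ← mul_assoc, neg_one_pow_sq, one_mul]

-- G6 : both slots have one `tp`
lemma G6 (p q A B : Polynomial ℂ) (h : p.natDegree = q.natDegree) :
    ip (A * tp p) (B * tp q) = ip (q * A) (p * B) := by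
  rw [bridge_left_t]
  rw [show p * (B * tp q) = (p * B) * tp q by ring]
  rw [bridge_right_t]
  rw [show q * (Polynomial.X ^ (2 * p.natDegree + 1) * A)
      = Polynomial.X ^ (2 * p.natDegree + 1) * (q * A) by ring]
  rw [h, ip_X_pow_mul]

-- G3 : sp left, tp right
lemma G3 (p q A B : Polynomial ℂ) (h : p.natDegree = q.natDegree) :
    ip (A * sp p) (B * tp q)
      = (-1)^p.natDegree * ip (q * A) (p.comp (-Polynomial.X) * B) := by
  rw [bridge_left_s]
  rw [show p.comp (-Polynomial.X) * (B * tp q) = (p.comp (-Polynomial.X) * B) * tp q by ring]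
  rw [bridge_right_t]
  rw [show q * (Polynomial.X ^ (2 * p.natDegree + 1) * A)
      = Polynomial.X ^ (2 * p.natDegree + 1) * (q * A) by ring]
  rw [h, ip_X_pow_mul]

-- G4 : tp left, sp right
lemma G4 (p q A B : Polynomial ℂ) (h : p.natDegree = q.natDegree) :
    ip (A * tp p) (B * sp q)
      = (-1)^q.natDegree * ip (q.comp (-Polynomial.X) * A) (p * B) := by
  rw [bridge_left_t]
  rw [show p * (B * sp q) = (p * B) * sp q by ring]
  rw [bridge_right_s]
  rw [show q.comp (-Polynomial.X) * (Polynomial.X ^ (2 * p.natDegree + 1) * A)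
      = Polynomial.X ^ (2 * p.natDegree + 1) * (q.comp (-Polynomial.X) * A) by ring]
  rw [h, ip_X_pow_mul]

lemma ip_neg_right (P Q : Polynomial ℂ) : ip P (-Q) = - ip P Q := by
  unfold ip
  rw [← Finset.sum_neg_distrib]
  apply Finset.sum_congr rfl
  intro k _
  rw [Polynomial.coeff_neg, map_neg, mul_neg]

lemma ip_X_pow_right (P : Polynomial ℂ) (a : ℕ) : ip P (Polynomial.X^a) = P.coeff a := by
  unfold ip
  rw [Finset.sum_eq_single a]
  · rw [Polynomial.coeff_X_pow, if_pos rfl, map_one, mul_one]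
  · intro k _ hk
    rw [Polynomial.coeff_X_pow, if_neg hk, map_zero, mul_zero]
  · intro ha
    rw [Polynomial.notMem_support_iff.mp ha, zero_mul]

lemma ip_X_pow_left (P : Polynomial ℂ) (a : ℕ) :
    ip (Polynomial.X^a) P = (starRingEnd ℂ) (P.coeff a) := by
  rw [ip_comm, ip_X_pow_right]

lemma ip_congr {A B A' B' : Polynomial ℂ} (hA : A = A') (hB : B = B') : ip A B = ip A' B' := by
  rw [hA, hB]

lemma parity_flip (P Q : Polynomial ℂ) {a : ℕ} (ha : Odd a) :
    ip (P.comp (-Polynomial.X)) (Polynomial.X^a * Q.comp (-Polynomial.X))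
      = - ip P (Polynomial.X^a * Q) := by
  have h := ip_comp_neg P (Polynomial.X^a * Q)
  rw [Polynomial.mul_comp, Polynomial.pow_comp, Polynomial.X_comp] at h
  rw [Odd.neg_pow ha, neg_mul, ip_neg_right] at h
  rw [← h]; ring

lemma even_prod_coeff_odd (f : Polynomial ℂ) {a : ℕ} (ha : Odd a) :
    (f * f.comp (-Polynomial.X)).coeff a = 0 := by
  have h := coeff_comp_neg_X (f * f.comp (-Polynomial.X)) a
  rw [Polynomial.mul_comp, comp_neg_neg, Odd.neg_one_pow ha] at h
  rw [show f.comp (-Polynomial.X) * f = f * f.comp (-Polynomial.X) from mul_comm _ _] at h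
  linear_combination h / 2

lemma stepN (f : Polynomial ℂ) (σc : ℂ)
    (hσc : (starRingEnd ℂ) σc = σc) (hσ2 : σc * σc = 1) :
    ip (f + Polynomial.C σc * sp f) (f + Polynomial.C σc * sp f) = 2 * ip f f := by
  have hodd : Odd (2*f.natDegree+1) := odd_two_mul_add_one _
  rw [ip_add_left, ip_add_right, ip_add_right, ip_C_mul_left, ip_C_mul_left,
      ip_C_mul_right, ip_C_mul_right, hσc]
  have h1 : ip f (sp f) = 0 := by
    rw [ip_congr rfl (show sp f = 1 * sp f from (one_mul _).symm), bridge_right_s]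
    rw [ip_congr rfl (show Polynomial.X ^ (2*f.natDegree+1) * 1
        = Polynomial.X ^ (2*f.natDegree+1) from mul_one _), ip_X_pow_right]
    rw [show f.comp (-Polynomial.X) * f = f * f.comp (-Polynomial.X) from mul_comm _ _,
        even_prod_coeff_odd f hodd, mul_zero]
  have h2 : ip (sp f) f = 0 := by
    rw [ip_comm, h1, map_zero]
  have h3 : ip (sp f) (sp f) = ip f f := by
    rw [ip_congr (show sp f = 1 * sp f from (one_mul _).symm)
        (show sp f = 1 * sp f from (one_mul _).symm), G5 f f 1 1 rfl]
    rw [ip_congr (show f.comp (-Polynomial.X) * 1 = f.comp (-Polynomial.X) from mul_one _)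
        (show f.comp (-Polynomial.X) * 1 = f.comp (-Polynomial.X) from mul_one _)]
    exact ip_comp_neg f f
  rw [h1, h2, h3]
  linear_combination (ip f f) * hσ2

lemma ip_expand4 (A B C D A' B' C' D' : Polynomial ℂ) :
    ip (A+B+C+D) (A'+B'+C'+D')
      = ip A A' + ip A B' + ip A C' + ip A D'
      + ip B A' + ip B B' + ip B C' + ip B D'
      + ip C A' + ip C B' + ip C C' + ip C D'
      + ip D A' + ip D B' + ip D C' + ip D D' := by
  simp only [ip_add_left, ip_add_right]
  ring

lemma parity_flip' (P Q : Polynomial ℂ) {a : ℕ} (ha : Odd a) :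
    ip (Polynomial.X^a * P.comp (-Polynomial.X)) (Q.comp (-Polynomial.X))
      = - ip (Polynomial.X^a * P) Q := by
  have h := ip_comp_neg (Polynomial.X^a * P) Q
  rw [Polynomial.mul_comp, Polynomial.pow_comp, Polynomial.X_comp] at h
  rw [Odd.neg_pow ha, neg_mul] at h
  have hneg : ip (-(Polynomial.X^a * P.comp (-Polynomial.X))) (Q.comp (-Polynomial.X))
      = - ip (Polynomial.X^a * P.comp (-Polynomial.X)) (Q.comp (-Polynomial.X)) := by
    rw [ip_comm, ip_neg_right, ip_comm (Polynomial.X^a * P.comp (-Polynomial.X)), map_neg]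
  rw [hneg] at h
  rw [← h]; ring

section StepLemmas

variable (f g : Polynomial ℂ) (σc : ℂ)

lemma stepU (hσc : (starRingEnd ℂ) σc = σc) (hσ2 : σc * σc = 1)
    (hd : g.natDegree = f.natDegree) :
    ip ((f + Polynomial.C σc * sp f) * (g + Polynomial.C σc * sp g))
       ((f + Polynomial.C σc * sp f) * (g + Polynomial.C σc * sp g))
      = 2 * ip (f*g) (f*g)
        + 2 * ip (f * g.comp (-Polynomial.X)) (f * g.comp (-Polynomial.X))
        + ip (f * f.comp (-Polynomial.X)) (g * g.comp (-Polynomial.X))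
        + ip (g * g.comp (-Polynomial.X)) (f * f.comp (-Polynomial.X)) := by
  have hodd : Odd (2*f.natDegree+1) := odd_two_mul_add_one _
  have hmul : (f + Polynomial.C σc * sp f) * (g + Polynomial.C σc * sp g)
      = f*g + Polynomial.C σc * (f * sp g) + Polynomial.C σc * (g * sp f) + sp f * sp g := by
    have hCC : Polynomial.C σc * Polynomial.C σc = 1 := by
      rw [← Polynomial.C_mul, hσ2, Polynomial.C_1]
    calc (f + Polynomial.C σc * sp f) * (g + Polynomial.C σc * sp g)
        = f*g + Polynomial.C σc * (f * sp g) + Polynomial.C σc * (g * sp f)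
          + (Polynomial.C σc * Polynomial.C σc) * (sp f * sp g) := by ring
      _ = _ := by rw [hCC, one_mul]
  rw [hmul, ip_expand4]
  simp only [ip_C_mul_left, ip_C_mul_right, hσc]
  -- the sixteen terms
  have E12 : ip (f*g) (f * sp g)
      = (-1:ℂ)^f.natDegree * ip (f * (g * g.comp (-Polynomial.X)))
          (Polynomial.X^(2*f.natDegree+1) * f) := by
    rw [bridge_right_s g (f*g) f, hd,
        ip_congr (show g.comp (-Polynomial.X) * (f*g)
          = f * (g * g.comp (-Polynomial.X)) by ring) rfl]
  have E34 : ip (g * sp f) (sp f * sp g)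
      = -((-1:ℂ)^f.natDegree * ip (f * (g * g.comp (-Polynomial.X)))
          (Polynomial.X^(2*f.natDegree+1) * f)) := by
    rw [G5 f g g (sp f) hd.symm, bridge_right_s f (g.comp (-Polynomial.X) * g) (f.comp (-Polynomial.X)),
        ip_congr (show f.comp (-Polynomial.X) * (g.comp (-Polynomial.X) * g)
          = (f * (g * g.comp (-Polynomial.X))).comp (-Polynomial.X) by
            simp only [Polynomial.mul_comp, comp_neg_neg]; try ring) rfl,
        parity_flip _ _ hodd]
    ring
  have E13 : ip (f*g) (g * sp f)
      = (-1:ℂ)^f.natDegree * ip (g * (f * f.comp (-Polynomial.X)))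
          (Polynomial.X^(2*f.natDegree+1) * g) := by
    rw [bridge_right_s f (f*g) g,
        ip_congr (show f.comp (-Polynomial.X) * (f*g)
          = g * (f * f.comp (-Polynomial.X)) by ring) rfl]
  have E24 : ip (f * sp g) (sp f * sp g)
      = -((-1:ℂ)^f.natDegree * ip (g * (f * f.comp (-Polynomial.X)))
          (Polynomial.X^(2*f.natDegree+1) * g)) := by
    rw [G5 g g f (sp f) rfl, bridge_right_s f (g.comp (-Polynomial.X) * f) (g.comp (-Polynomial.X)),
        ip_congr (show f.comp (-Polynomial.X) * (g.comp (-Polynomial.X) * f)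
          = (g * (f * f.comp (-Polynomial.X))).comp (-Polynomial.X) by
            simp only [Polynomial.mul_comp, comp_neg_neg]; try ring)
          (show Polynomial.X^(2*f.natDegree+1) * g.comp (-Polynomial.X)
          = Polynomial.X^(2*f.natDegree+1) * g.comp (-Polynomial.X) from rfl),
        parity_flip _ _ hodd]
    ring
  have E21 : ip (f * sp g) (f*g)
      = (-1:ℂ)^f.natDegree * ip (Polynomial.X^(2*f.natDegree+1) * f)
          (f * (g * g.comp (-Polynomial.X))) := by
    rw [bridge_left_s g f (f*g), hd,
        ip_congr rfl (show g.comp (-Polynomial.X) * (f*g)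
          = f * (g * g.comp (-Polynomial.X)) by ring)]
  have E43 : ip (sp f * sp g) (g * sp f)
      = -((-1:ℂ)^f.natDegree * ip (Polynomial.X^(2*f.natDegree+1) * f)
          (f * (g * g.comp (-Polynomial.X)))) := by
    rw [G5 g f (sp f) g hd, bridge_left_s f (f.comp (-Polynomial.X)) (g.comp (-Polynomial.X) * g),
        ip_congr rfl (show f.comp (-Polynomial.X) * (g.comp (-Polynomial.X) * g)
          = (f * (g * g.comp (-Polynomial.X))).comp (-Polynomial.X) by
            simp only [Polynomial.mul_comp, comp_neg_neg]; try ring),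
        parity_flip' _ _ hodd]
    ring
  have E31 : ip (g * sp f) (f*g)
      = (-1:ℂ)^f.natDegree * ip (Polynomial.X^(2*f.natDegree+1) * g)
          (g * (f * f.comp (-Polynomial.X))) := by
    rw [bridge_left_s f g (f*g),
        ip_congr rfl (show f.comp (-Polynomial.X) * (f*g)
          = g * (f * f.comp (-Polynomial.X)) by ring)]
  have E42 : ip (sp f * sp g) (f * sp g)
      = -((-1:ℂ)^f.natDegree * ip (Polynomial.X^(2*f.natDegree+1) * g)
          (g * (f * f.comp (-Polynomial.X)))) := by
    rw [G5 g g (sp f) f rfl, bridge_left_s f (g.comp (-Polynomial.X)) (g.comp (-Polynomial.X) * f),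
        ip_congr rfl (show f.comp (-Polynomial.X) * (g.comp (-Polynomial.X) * f)
          = (g * (f * f.comp (-Polynomial.X))).comp (-Polynomial.X) by
            simp only [Polynomial.mul_comp, comp_neg_neg]; try ring),
        parity_flip' _ _ hodd]
    ring
  have E22 : ip (f * sp g) (f * sp g)
      = ip (f * g.comp (-Polynomial.X)) (f * g.comp (-Polynomial.X)) := by
    rw [G5 g g f f rfl,
        ip_congr (mul_comm _ _) (mul_comm _ _)]
  have E33 : ip (g * sp f) (g * sp f)
      = ip (f * g.comp (-Polynomial.X)) (f * g.comp (-Polynomial.X)) := by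
    rw [G5 f f g g rfl,
        ip_congr (show f.comp (-Polynomial.X) * g
            = (f * g.comp (-Polynomial.X)).comp (-Polynomial.X) by
              simp only [Polynomial.mul_comp, comp_neg_neg])
          (show f.comp (-Polynomial.X) * g
            = (f * g.comp (-Polynomial.X)).comp (-Polynomial.X) by
              simp only [Polynomial.mul_comp, comp_neg_neg]),
        ip_comp_neg]
  have E23 : ip (f * sp g) (g * sp f)
      = ip (f * f.comp (-Polynomial.X)) (g * g.comp (-Polynomial.X)) := by
    rw [G5 g f f g hd,
        ip_congr (mul_comm _ _) (mul_comm _ _)]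
  have E32 : ip (g * sp f) (f * sp g)
      = ip (g * g.comp (-Polynomial.X)) (f * f.comp (-Polynomial.X)) := by
    rw [G5 f g g f hd.symm,
        ip_congr (mul_comm _ _) (mul_comm _ _)]
  have E44 : ip (sp f * sp g) (sp f * sp g) = ip (f*g) (f*g) := by
    rw [G5 g g (sp f) (sp f) rfl, G5 f f (g.comp (-Polynomial.X)) (g.comp (-Polynomial.X)) rfl,
        ip_congr (show f.comp (-Polynomial.X) * g.comp (-Polynomial.X)
            = (f * g).comp (-Polynomial.X) by simp only [Polynomial.mul_comp])
          (show f.comp (-Polynomial.X) * g.comp (-Polynomial.X)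
            = (f * g).comp (-Polynomial.X) by simp only [Polynomial.mul_comp]),
        ip_comp_neg]
  have hdeg : (f.comp (-Polynomial.X) * (g.comp (-Polynomial.X) * (f*g))).natDegree
      < (2*f.natDegree+1) + (2*f.natDegree+1) := by
    calc (f.comp (-Polynomial.X) * (g.comp (-Polynomial.X) * (f*g))).natDegree
        ≤ (f.comp (-Polynomial.X)).natDegree + (g.comp (-Polynomial.X) * (f*g)).natDegree :=
          Polynomial.natDegree_mul_le
      _ ≤ (f.comp (-Polynomial.X)).natDegree + ((g.comp (-Polynomial.X)).natDegree
            + ((f*g)).natDegree) := by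
          exact Nat.add_le_add_left Polynomial.natDegree_mul_le _
      _ ≤ f.natDegree + (g.natDegree + (f.natDegree + g.natDegree)) := by
          refine add_le_add (natDegree_comp_neg_X_le f)
            (add_le_add (natDegree_comp_neg_X_le g) Polynomial.natDegree_mul_le)
      _ < (2*f.natDegree+1) + (2*f.natDegree+1) := by rw [hd]; omega
  have E14 : ip (f*g) (sp f * sp g) = 0 := by
    rw [bridge_right_s g (f*g) (sp f), hd,
        bridge_right_s f (g.comp (-Polynomial.X) * (f*g)) (Polynomial.X^(2*f.natDegree+1)),
        ip_congr rfl ((pow_add (Polynomial.X : Polynomial ℂ) (2*f.natDegree+1) (2*f.natDegree+1)).symm),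
        ip_X_pow_right, Polynomial.coeff_eq_zero_of_natDegree_lt hdeg, mul_zero, mul_zero]
  have E41 : ip (sp f * sp g) (f*g) = 0 := by
    rw [ip_comm, E14, map_zero]
  rw [E12, E13, E14, E21, E22, E23, E24, E31, E32, E33, E34, E41, E42, E43, E44]
  linear_combination (2 * ip (f * g.comp (-Polynomial.X)) (f * g.comp (-Polynomial.X))
    + ip (f * f.comp (-Polynomial.X)) (g * g.comp (-Polynomial.X))
    + ip (g * g.comp (-Polynomial.X)) (f * f.comp (-Polynomial.X))) * hσ2

end StepLemmas

lemma ip_neg_left (P Q : Polynomial ℂ) : ip (-P) Q = - ip P Q := by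
  rw [ip_comm, ip_neg_right, map_neg, ← ip_comm]

lemma sp_comp_neg (p : Polynomial ℂ) :
    (sp p).comp (-Polynomial.X) = Polynomial.C ((-1:ℂ)^(p.natDegree+1)) * tp p := by
  unfold sp tp
  rw [Polynomial.mul_comp, Polynomial.pow_comp, Polynomial.X_comp, comp_neg_neg]
  rw [neg_pow]
  rw [show ((-1 : Polynomial ℂ))^(p.natDegree+1)
      = Polynomial.C ((-1:ℂ)^(p.natDegree+1)) by rw [map_pow, map_neg, Polynomial.C_1]]
  ring

lemma bound4 (p1 p2 p3 p4 : Polynomial ℂ) :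
    (p1 * (p2 * (p3 * p4))).natDegree
      ≤ p1.natDegree + (p2.natDegree + (p3.natDegree + p4.natDegree)) := by
  refine le_trans Polynomial.natDegree_mul_le (Nat.add_le_add_left ?_ _)
  refine le_trans Polynomial.natDegree_mul_le (Nat.add_le_add_left ?_ _)
  exact Polynomial.natDegree_mul_le

lemma neg_one_pow_cases (d : ℕ) : ((-1:ℂ)^d) = 1 ∨ ((-1:ℂ)^d) = -1 := by
  rcases Nat.even_or_odd d with h | h
  · exact Or.inl (h.neg_one_pow)
  · exact Or.inr (h.neg_one_pow)

section StepV

variable (f g : Polynomial ℂ) (σc : ℂ)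

lemma stepV (hσpm : σc = 1 ∨ σc = -1) (hd : g.natDegree = f.natDegree) :
    ip ((f + Polynomial.C σc * sp f) * ((g + Polynomial.C σc * sp g).comp (-Polynomial.X)))
       ((f + Polynomial.C σc * sp f) * ((g + Polynomial.C σc * sp g).comp (-Polynomial.X)))
      = 2 * ip (f*g) (f*g)
        + 2 * ip (f * g.comp (-Polynomial.X)) (f * g.comp (-Polynomial.X))
        - ip (f * f.comp (-Polynomial.X)) (g * g.comp (-Polynomial.X))
        - ip (g * g.comp (-Polynomial.X)) (f * f.comp (-Polynomial.X)) := by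
  have hσc : (starRingEnd ℂ) σc = σc := by rcases hσpm with h|h <;> simp [h]
  have hodd : Odd (2*f.natDegree+1) := odd_two_mul_add_one _
  have hcomp : (g + Polynomial.C σc * sp g).comp (-Polynomial.X)
      = g.comp (-Polynomial.X)
        + Polynomial.C σc * (Polynomial.C (-(-1:ℂ)^f.natDegree) * tp g) := by
    rw [Polynomial.add_comp, Polynomial.mul_comp, Polynomial.C_comp, sp_comp_neg, hd,
        pow_succ]
    ring_nf
  have hmul : (f + Polynomial.C σc * sp f) * ((g + Polynomial.C σc * sp g).comp (-Polynomial.X))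
      = f * g.comp (-Polynomial.X)
        + Polynomial.C σc * (Polynomial.C (-(-1:ℂ)^f.natDegree) * (f * tp g))
        + Polynomial.C σc * (g.comp (-Polynomial.X) * sp f)
        + Polynomial.C σc * (Polynomial.C σc * (Polynomial.C (-(-1:ℂ)^f.natDegree)
            * (sp f * tp g))) := by
    rw [hcomp]; ring
  rw [hmul, ip_expand4]
  simp only [neg_mul, ip_neg_left, ip_neg_right, ip_C_mul_left, ip_C_mul_right, hσc,
    map_neg, conj_neg_one_pow, mul_neg, neg_neg]
  -- diagonal terms
  have F11 : True := trivial
  have F22 : ip (f * tp g) (f * tp g) = ip (f*g) (f*g) := by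
    rw [G6 g g f f rfl, ip_congr (mul_comm _ _) (mul_comm _ _)]
  have F33 : ip (g.comp (-Polynomial.X) * sp f) (g.comp (-Polynomial.X) * sp f)
      = ip (f*g) (f*g) := by
    rw [G5 f f (g.comp (-Polynomial.X)) (g.comp (-Polynomial.X)) rfl,
        ip_congr (show f.comp (-Polynomial.X) * g.comp (-Polynomial.X)
            = (f*g).comp (-Polynomial.X) by simp only [Polynomial.mul_comp])
          (show f.comp (-Polynomial.X) * g.comp (-Polynomial.X)
            = (f*g).comp (-Polynomial.X) by simp only [Polynomial.mul_comp]),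
        ip_comp_neg]
  have F44 : ip (sp f * tp g) (sp f * tp g)
      = ip (f * g.comp (-Polynomial.X)) (f * g.comp (-Polynomial.X)) := by
    rw [G6 g g (sp f) (sp f) rfl, G5 f f g g rfl,
        ip_congr (show f.comp (-Polynomial.X) * g
            = (f * g.comp (-Polynomial.X)).comp (-Polynomial.X) by
              simp only [Polynomial.mul_comp, comp_neg_neg])
          (show f.comp (-Polynomial.X) * g
            = (f * g.comp (-Polynomial.X)).comp (-Polynomial.X) by
              simp only [Polynomial.mul_comp, comp_neg_neg]),
        ip_comp_neg]
  have F23 : ip (f * tp g) (g.comp (-Polynomial.X) * sp f)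
      = (-1:ℂ)^f.natDegree
          * ip (f * f.comp (-Polynomial.X)) (g * g.comp (-Polynomial.X)) := by
    rw [G4 g f f (g.comp (-Polynomial.X)) hd,
        ip_congr (mul_comm _ _) rfl]
  have F32 : ip (g.comp (-Polynomial.X) * sp f) (f * tp g)
      = (-1:ℂ)^f.natDegree
          * ip (g * g.comp (-Polynomial.X)) (f * f.comp (-Polynomial.X)) := by
    rw [G3 f g (g.comp (-Polynomial.X)) f hd.symm,
        ip_congr rfl (mul_comm _ _)]
  -- sigma-linear terms, pair 1
  have F12 : ip (f * g.comp (-Polynomial.X)) (f * tp g)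
      = ip (f * (g * g.comp (-Polynomial.X))) (Polynomial.X^(2*f.natDegree+1) * f) := by
    rw [bridge_right_t g (f * g.comp (-Polynomial.X)) f, hd,
        ip_congr (show g * (f * g.comp (-Polynomial.X))
          = f * (g * g.comp (-Polynomial.X)) by ring) rfl]
  have F34 : ip (g.comp (-Polynomial.X) * sp f) (sp f * tp g)
      = (-1:ℂ)^f.natDegree * ((-1:ℂ)^f.natDegree
          * -(ip (f * (g * g.comp (-Polynomial.X))) (Polynomial.X^(2*f.natDegree+1) * f))) := by
    rw [G3 f g (g.comp (-Polynomial.X)) (sp f) hd.symm,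
        ip_congr (show g * g.comp (-Polynomial.X) = g * g.comp (-Polynomial.X) from rfl) rfl,
        bridge_right_s f (g * g.comp (-Polynomial.X)) (f.comp (-Polynomial.X)),
        ip_congr (show f.comp (-Polynomial.X) * (g * g.comp (-Polynomial.X))
          = (f * (g * g.comp (-Polynomial.X))).comp (-Polynomial.X) by
            simp only [Polynomial.mul_comp, comp_neg_neg]; try ring) rfl,
        parity_flip _ _ hodd]
  -- sigma-linear terms, pair 2
  have F21 : ip (f * tp g) (f * g.comp (-Polynomial.X))
      = ip (Polynomial.X^(2*f.natDegree+1) * f) (f * (g * g.comp (-Polynomial.X))) := by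
    rw [bridge_left_t g f (f * g.comp (-Polynomial.X)), hd,
        ip_congr rfl (show g * (f * g.comp (-Polynomial.X))
          = f * (g * g.comp (-Polynomial.X)) by ring)]
  have F43 : ip (sp f * tp g) (g.comp (-Polynomial.X) * sp f)
      = (-1:ℂ)^f.natDegree * ((-1:ℂ)^f.natDegree
          * -(ip (Polynomial.X^(2*f.natDegree+1) * f) (f * (g * g.comp (-Polynomial.X))))) := by
    rw [G4 g f (sp f) (g.comp (-Polynomial.X)) hd,
        bridge_left_s f (f.comp (-Polynomial.X)) (g * g.comp (-Polynomial.X)),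
        ip_congr rfl (show f.comp (-Polynomial.X) * (g * g.comp (-Polynomial.X))
          = (f * (g * g.comp (-Polynomial.X))).comp (-Polynomial.X) by
            simp only [Polynomial.mul_comp, comp_neg_neg]; try ring),
        parity_flip' _ _ hodd]
  -- sigma-linear terms, pair 3
  have F13 : ip (f * g.comp (-Polynomial.X)) (g.comp (-Polynomial.X) * sp f)
      = (-1:ℂ)^f.natDegree
          * -(ip (g * (f * f.comp (-Polynomial.X))) (Polynomial.X^(2*f.natDegree+1) * g)) := by
    rw [bridge_right_s f (f * g.comp (-Polynomial.X)) (g.comp (-Polynomial.X)),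
        ip_congr (show f.comp (-Polynomial.X) * (f * g.comp (-Polynomial.X))
          = (g * (f * f.comp (-Polynomial.X))).comp (-Polynomial.X) by
            simp only [Polynomial.mul_comp, comp_neg_neg]; try ring) rfl,
        parity_flip _ _ hodd]
  have F24 : ip (f * tp g) (sp f * tp g)
      = (-1:ℂ)^f.natDegree
          * ip (g * (f * f.comp (-Polynomial.X))) (Polynomial.X^(2*f.natDegree+1) * g) := by
    rw [G6 g g f (sp f) rfl, bridge_right_s f (g * f) g,
        ip_congr (show f.comp (-Polynomial.X) * (g * f)
          = g * (f * f.comp (-Polynomial.X)) by ring) rfl]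
  -- sigma-linear terms, pair 4
  have F31 : ip (g.comp (-Polynomial.X) * sp f) (f * g.comp (-Polynomial.X))
      = (-1:ℂ)^f.natDegree
          * -(ip (Polynomial.X^(2*f.natDegree+1) * g) (g * (f * f.comp (-Polynomial.X)))) := by
    rw [bridge_left_s f (g.comp (-Polynomial.X)) (f * g.comp (-Polynomial.X)),
        ip_congr (show Polynomial.X^(2*f.natDegree+1) * g.comp (-Polynomial.X)
            = Polynomial.X^(2*f.natDegree+1) * g.comp (-Polynomial.X) from rfl)
          (show f.comp (-Polynomial.X) * (f * g.comp (-Polynomial.X))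
            = (g * (f * f.comp (-Polynomial.X))).comp (-Polynomial.X) by
              simp only [Polynomial.mul_comp, comp_neg_neg]; try ring),
        parity_flip' _ _ hodd]
  have F42 : ip (sp f * tp g) (f * tp g)
      = (-1:ℂ)^f.natDegree
          * ip (Polynomial.X^(2*f.natDegree+1) * g) (g * (f * f.comp (-Polynomial.X))) := by
    rw [G6 g g (sp f) f rfl, bridge_left_s f g (g * f),
        ip_congr rfl (show f.comp (-Polynomial.X) * (g * f)
          = g * (f * f.comp (-Polynomial.X)) by ring)]
  -- zero terms
  have hdeg : (f.comp (-Polynomial.X) * (g * (f * g.comp (-Polynomial.X)))).natDegree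
      < (2*f.natDegree+1) + (2*f.natDegree+1) := by
    refine lt_of_le_of_lt (bound4 _ _ _ _) ?_
    have h1 := natDegree_comp_neg_X_le f
    have h2 := natDegree_comp_neg_X_le g
    omega
  have F14 : ip (f * g.comp (-Polynomial.X)) (sp f * tp g) = 0 := by
    rw [bridge_right_t g (f * g.comp (-Polynomial.X)) (sp f), hd,
        bridge_right_s f (g * (f * g.comp (-Polynomial.X))) (Polynomial.X^(2*f.natDegree+1)),
        ip_congr rfl ((pow_add (Polynomial.X : Polynomial ℂ) (2*f.natDegree+1) (2*f.natDegree+1)).symm),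
        ip_X_pow_right, Polynomial.coeff_eq_zero_of_natDegree_lt hdeg, mul_zero]
  have F41 : ip (sp f * tp g) (f * g.comp (-Polynomial.X)) = 0 := by
    rw [ip_comm, F14, map_zero]
  rw [F12, F13, F14, F21, F22, F23, F24, F31, F32, F33, F34, F41, F42, F43, F44]
  rcases hσpm with h1|h1 <;> rcases neg_one_pow_cases f.natDegree with h2|h2 <;>
    rw [h1, h2] <;> ring

end StepV

section StepW

variable (f g : Polynomial ℂ) (σc : ℂ)

lemma stepW (hσpm : σc = 1 ∨ σc = -1) (hd : g.natDegree = f.natDegree) :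
    ip ((f + Polynomial.C σc * sp f) * ((f + Polynomial.C σc * sp f).comp (-Polynomial.X)))
       ((g + Polynomial.C σc * sp g) * ((g + Polynomial.C σc * sp g).comp (-Polynomial.X)))
      = 2 * ip (f*g) (f*g)
        - 2 * ip (f * g.comp (-Polynomial.X)) (f * g.comp (-Polynomial.X))
        + ip (f * f.comp (-Polynomial.X)) (g * g.comp (-Polynomial.X))
        + ip (g * g.comp (-Polynomial.X)) (f * f.comp (-Polynomial.X))
        + 2 * (σc * (-1:ℂ)^f.natDegree) *
          ((ip (Polynomial.X^(2*f.natDegree+1) * g) (g * (f * f.comp (-Polynomial.X)))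
            - ip (g * (f * f.comp (-Polynomial.X))) (Polynomial.X^(2*f.natDegree+1) * g))
          + (ip (f * (g * g.comp (-Polynomial.X))) (Polynomial.X^(2*f.natDegree+1) * f)
            - ip (Polynomial.X^(2*f.natDegree+1) * f) (f * (g * g.comp (-Polynomial.X))))) := by
  have hσc : (starRingEnd ℂ) σc = σc := by rcases hσpm with h|h <;> simp [h]
  have hodd : Odd (2*f.natDegree+1) := odd_two_mul_add_one _
  have hcompf : (f + Polynomial.C σc * sp f).comp (-Polynomial.X)
      = f.comp (-Polynomial.X)
        + Polynomial.C σc * (Polynomial.C (-(-1:ℂ)^f.natDegree) * tp f) := by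
    rw [Polynomial.add_comp, Polynomial.mul_comp, Polynomial.C_comp, sp_comp_neg, pow_succ]
    ring_nf
  have hcompg : (g + Polynomial.C σc * sp g).comp (-Polynomial.X)
      = g.comp (-Polynomial.X)
        + Polynomial.C σc * (Polynomial.C (-(-1:ℂ)^f.natDegree) * tp g) := by
    rw [Polynomial.add_comp, Polynomial.mul_comp, Polynomial.C_comp, sp_comp_neg, hd, pow_succ]
    ring_nf
  have hmulf : (f + Polynomial.C σc * sp f) * ((f + Polynomial.C σc * sp f).comp (-Polynomial.X))
      = f * f.comp (-Polynomial.X)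
        + Polynomial.C σc * (Polynomial.C (-(-1:ℂ)^f.natDegree) * (f * tp f))
        + Polynomial.C σc * (f.comp (-Polynomial.X) * sp f)
        + Polynomial.C σc * (Polynomial.C σc * (Polynomial.C (-(-1:ℂ)^f.natDegree)
            * (sp f * tp f))) := by
    rw [hcompf]; ring
  have hmulg : (g + Polynomial.C σc * sp g) * ((g + Polynomial.C σc * sp g).comp (-Polynomial.X))
      = g * g.comp (-Polynomial.X)
        + Polynomial.C σc * (Polynomial.C (-(-1:ℂ)^f.natDegree) * (g * tp g))
        + Polynomial.C σc * (g.comp (-Polynomial.X) * sp g)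
        + Polynomial.C σc * (Polynomial.C σc * (Polynomial.C (-(-1:ℂ)^f.natDegree)
            * (sp g * tp g))) := by
    rw [hcompg]; ring
  rw [hmulf, hmulg, ip_expand4]
  simp only [neg_mul, ip_neg_left, ip_neg_right, ip_C_mul_left, ip_C_mul_right, hσc,
    map_neg, conj_neg_one_pow, mul_neg, neg_neg]
  -- diagonal values
  have H22 : ip (f * tp f) (g * tp g) = ip (f*g) (f*g) := by
    rw [G6 f g f g hd.symm, ip_congr (mul_comm _ _) rfl]
  have H33 : ip (f.comp (-Polynomial.X) * sp f) (g.comp (-Polynomial.X) * sp g)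
      = ip (f*g) (f*g) := by
    rw [G5 f g (f.comp (-Polynomial.X)) (g.comp (-Polynomial.X)) hd.symm,
        ip_congr (show g.comp (-Polynomial.X) * f.comp (-Polynomial.X)
            = (f*g).comp (-Polynomial.X) by simp only [Polynomial.mul_comp]; try ring)
          (show f.comp (-Polynomial.X) * g.comp (-Polynomial.X)
            = (f*g).comp (-Polynomial.X) by simp only [Polynomial.mul_comp]; try ring),
        ip_comp_neg]
  have H44 : ip (sp f * tp f) (sp g * tp g)
      = (-1:ℂ)^f.natDegree * ((-1:ℂ)^f.natDegree
          * ip (g * g.comp (-Polynomial.X)) (f * f.comp (-Polynomial.X))) := by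
    rw [bridge_left_t f (sp f) (sp g * tp g),
        bridge_left_s f (Polynomial.X^(2*f.natDegree+1)) (f * (sp g * tp g)),
        ip_congr rfl (show f.comp (-Polynomial.X) * (f * (sp g * tp g))
          = (f.comp (-Polynomial.X) * (f * sp g)) * tp g by ring),
        bridge_right_t g, hd,
        ip_congr rfl (show Polynomial.X^(2*f.natDegree+1) * (f.comp (-Polynomial.X) * (f * sp g))
          = (Polynomial.X^(2*f.natDegree+1) * (f.comp (-Polynomial.X) * f)) * sp g by ring),
        bridge_right_s g, hd,
        ip_congr (show g.comp (-Polynomial.X)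
              * (g * (Polynomial.X^(2*f.natDegree+1) * Polynomial.X^(2*f.natDegree+1)))
            = Polynomial.X^(2*f.natDegree+1) * (Polynomial.X^(2*f.natDegree+1)
              * (g * g.comp (-Polynomial.X))) by ring)
          (show Polynomial.X^(2*f.natDegree+1) * (Polynomial.X^(2*f.natDegree+1)
              * (f.comp (-Polynomial.X) * f))
            = Polynomial.X^(2*f.natDegree+1) * (Polynomial.X^(2*f.natDegree+1)
              * (f.comp (-Polynomial.X) * f)) from rfl),
        ip_X_pow_mul, ip_X_pow_mul,
        ip_congr rfl (show f.comp (-Polynomial.X) * f = f * f.comp (-Polynomial.X) from mul_comm _ _)]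
  have H23 : ip (f * tp f) (g.comp (-Polynomial.X) * sp g)
      = (-1:ℂ)^f.natDegree
          * ip (f * g.comp (-Polynomial.X)) (f * g.comp (-Polynomial.X)) := by
    rw [G4 f g f (g.comp (-Polynomial.X)) hd.symm, hd,
        ip_congr (mul_comm _ _) rfl]
  have H32 : ip (f.comp (-Polynomial.X) * sp f) (g * tp g)
      = (-1:ℂ)^f.natDegree
          * ip (f * g.comp (-Polynomial.X)) (f * g.comp (-Polynomial.X)) := by
    rw [G3 f g (f.comp (-Polynomial.X)) g hd.symm,
        ip_congr (show g * f.comp (-Polynomial.X)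
            = (f * g.comp (-Polynomial.X)).comp (-Polynomial.X) by
              simp only [Polynomial.mul_comp, comp_neg_neg]; try ring)
          (show f.comp (-Polynomial.X) * g
            = (f * g.comp (-Polynomial.X)).comp (-Polynomial.X) by
              simp only [Polynomial.mul_comp, comp_neg_neg]; try ring),
        ip_comp_neg]
  -- gamma terms
  have H12 : ip (f * f.comp (-Polynomial.X)) (g * tp g)
      = ip (g * (f * f.comp (-Polynomial.X))) (Polynomial.X^(2*f.natDegree+1) * g) := by
    rw [bridge_right_t g (f * f.comp (-Polynomial.X)) g, hd]
  have H13 : ip (f * f.comp (-Polynomial.X)) (g.comp (-Polynomial.X) * sp g)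
      = (-1:ℂ)^f.natDegree
          * -(ip (g * (f * f.comp (-Polynomial.X))) (Polynomial.X^(2*f.natDegree+1) * g)) := by
    rw [bridge_right_s g (f * f.comp (-Polynomial.X)) (g.comp (-Polynomial.X)), hd,
        ip_congr (show g.comp (-Polynomial.X) * (f * f.comp (-Polynomial.X))
          = (g * (f * f.comp (-Polynomial.X))).comp (-Polynomial.X) by
            simp only [Polynomial.mul_comp, comp_neg_neg]; try ring) rfl,
        parity_flip _ _ hodd]
  have H42 : ip (sp f * tp f) (g * tp g)
      = (-1:ℂ)^f.natDegree
          * ip (Polynomial.X^(2*f.natDegree+1) * g) (g * (f * f.comp (-Polynomial.X))) := by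
    rw [bridge_left_t f (sp f) (g * tp g),
        bridge_left_s f (Polynomial.X^(2*f.natDegree+1)) (f * (g * tp g)),
        ip_congr rfl (show f.comp (-Polynomial.X) * (f * (g * tp g))
          = (f.comp (-Polynomial.X) * (f * g)) * tp g by ring),
        bridge_right_t g, hd,
        ip_congr (show g * (Polynomial.X^(2*f.natDegree+1) * Polynomial.X^(2*f.natDegree+1))
              = Polynomial.X^(2*f.natDegree+1) * (Polynomial.X^(2*f.natDegree+1) * g) by ring)
          (show Polynomial.X^(2*f.natDegree+1) * (f.comp (-Polynomial.X) * (f * g))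
            = Polynomial.X^(2*f.natDegree+1) * (f.comp (-Polynomial.X) * (f * g)) from rfl),
        ip_X_pow_mul,
        ip_congr rfl (show f.comp (-Polynomial.X) * (f * g)
          = g * (f * f.comp (-Polynomial.X)) by ring)]
  have H43 : ip (sp f * tp f) (g.comp (-Polynomial.X) * sp g)
      = (-1:ℂ)^f.natDegree * ((-1:ℂ)^f.natDegree
          * -(ip (Polynomial.X^(2*f.natDegree+1) * g) (g * (f * f.comp (-Polynomial.X))))) := by
    rw [bridge_left_t f (sp f) (g.comp (-Polynomial.X) * sp g),
        bridge_left_s f (Polynomial.X^(2*f.natDegree+1)) (f * (g.comp (-Polynomial.X) * sp g)),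
        ip_congr rfl (show f.comp (-Polynomial.X) * (f * (g.comp (-Polynomial.X) * sp g))
          = (f.comp (-Polynomial.X) * (f * g.comp (-Polynomial.X))) * sp g by ring),
        bridge_right_s g, hd,
        ip_congr (show g.comp (-Polynomial.X) * (Polynomial.X^(2*f.natDegree+1)
              * Polynomial.X^(2*f.natDegree+1))
            = Polynomial.X^(2*f.natDegree+1)
              * (Polynomial.X^(2*f.natDegree+1) * g.comp (-Polynomial.X)) by ring)
          (show Polynomial.X^(2*f.natDegree+1) * (f.comp (-Polynomial.X)
              * (f * g.comp (-Polynomial.X)))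
            = Polynomial.X^(2*f.natDegree+1) * (f.comp (-Polynomial.X)
              * (f * g.comp (-Polynomial.X))) from rfl),
        ip_X_pow_mul,
        ip_congr (show Polynomial.X^(2*f.natDegree+1) * g.comp (-Polynomial.X)
            = Polynomial.X^(2*f.natDegree+1) * g.comp (-Polynomial.X) from rfl)
          (show f.comp (-Polynomial.X) * (f * g.comp (-Polynomial.X))
            = (g * (f * f.comp (-Polynomial.X))).comp (-Polynomial.X) by
              simp only [Polynomial.mul_comp, comp_neg_neg]; try ring),
        parity_flip' _ _ hodd]
  -- delta terms
  have H21 : ip (f * tp f) (g * g.comp (-Polynomial.X))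
      = ip (Polynomial.X^(2*f.natDegree+1) * f) (f * (g * g.comp (-Polynomial.X))) := by
    rw [bridge_left_t f f (g * g.comp (-Polynomial.X))]
  have H31 : ip (f.comp (-Polynomial.X) * sp f) (g * g.comp (-Polynomial.X))
      = (-1:ℂ)^f.natDegree
          * -(ip (Polynomial.X^(2*f.natDegree+1) * f) (f * (g * g.comp (-Polynomial.X)))) := by
    rw [bridge_left_s f (f.comp (-Polynomial.X)) (g * g.comp (-Polynomial.X)),
        ip_congr rfl (show f.comp (-Polynomial.X) * (g * g.comp (-Polynomial.X))
          = (f * (g * g.comp (-Polynomial.X))).comp (-Polynomial.X) by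
            simp only [Polynomial.mul_comp, comp_neg_neg]; try ring),
        parity_flip' _ _ hodd]
  have H24 : ip (f * tp f) (sp g * tp g)
      = (-1:ℂ)^f.natDegree
          * ip (f * (g * g.comp (-Polynomial.X))) (Polynomial.X^(2*f.natDegree+1) * f) := by
    rw [bridge_right_t g (f * tp f) (sp g), hd,
        bridge_right_s g (g * (f * tp f)) (Polynomial.X^(2*f.natDegree+1)), hd,
        ip_congr (show g.comp (-Polynomial.X) * (g * (f * tp f))
          = (g.comp (-Polynomial.X) * (g * f)) * tp f by ring) rfl,
        bridge_left_t f,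
        ip_congr (show Polynomial.X^(2*f.natDegree+1) * (g.comp (-Polynomial.X) * (g * f))
            = Polynomial.X^(2*f.natDegree+1) * (g.comp (-Polynomial.X) * (g * f)) from rfl)
          (show f * (Polynomial.X^(2*f.natDegree+1) * Polynomial.X^(2*f.natDegree+1))
            = Polynomial.X^(2*f.natDegree+1) * (Polynomial.X^(2*f.natDegree+1) * f) by ring),
        ip_X_pow_mul,
        ip_congr (show g.comp (-Polynomial.X) * (g * f)
          = f * (g * g.comp (-Polynomial.X)) by ring) rfl]
  have H34 : ip (f.comp (-Polynomial.X) * sp f) (sp g * tp g)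
      = (-1:ℂ)^f.natDegree * ((-1:ℂ)^f.natDegree
          * -(ip (f * (g * g.comp (-Polynomial.X))) (Polynomial.X^(2*f.natDegree+1) * f))) := by
    rw [bridge_right_t g (f.comp (-Polynomial.X) * sp f) (sp g), hd,
        bridge_right_s g (g * (f.comp (-Polynomial.X) * sp f)) (Polynomial.X^(2*f.natDegree+1)), hd,
        ip_congr (show g.comp (-Polynomial.X) * (g * (f.comp (-Polynomial.X) * sp f))
          = (g.comp (-Polynomial.X) * (g * f.comp (-Polynomial.X))) * sp f by ring) rfl,
        bridge_left_s f,
        ip_congr (show Polynomial.X^(2*f.natDegree+1) * (g.comp (-Polynomial.X)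
              * (g * f.comp (-Polynomial.X)))
            = Polynomial.X^(2*f.natDegree+1) * (g.comp (-Polynomial.X)
              * (g * f.comp (-Polynomial.X))) from rfl)
          (show f.comp (-Polynomial.X) * (Polynomial.X^(2*f.natDegree+1)
              * Polynomial.X^(2*f.natDegree+1))
            = Polynomial.X^(2*f.natDegree+1)
              * (Polynomial.X^(2*f.natDegree+1) * f.comp (-Polynomial.X)) by ring),
        ip_X_pow_mul,
        ip_congr (show g.comp (-Polynomial.X) * (g * f.comp (-Polynomial.X))
            = (f * (g * g.comp (-Polynomial.X))).comp (-Polynomial.X) by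
              simp only [Polynomial.mul_comp, comp_neg_neg]; try ring)
          (show Polynomial.X^(2*f.natDegree+1) * f.comp (-Polynomial.X)
            = Polynomial.X^(2*f.natDegree+1) * f.comp (-Polynomial.X) from rfl),
        parity_flip _ _ hodd]
  -- zero terms
  have hdeg1 : (g.comp (-Polynomial.X) * (g * (f * f.comp (-Polynomial.X)))).natDegree
      < (2*f.natDegree+1) + (2*f.natDegree+1) := by
    refine lt_of_le_of_lt (bound4 _ _ _ _) ?_
    have h1 := natDegree_comp_neg_X_le f
    have h2 := natDegree_comp_neg_X_le g
    omega
  have H14 : ip (f * f.comp (-Polynomial.X)) (sp g * tp g) = 0 := by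
    rw [bridge_right_t g (f * f.comp (-Polynomial.X)) (sp g), hd,
        bridge_right_s g (g * (f * f.comp (-Polynomial.X))) (Polynomial.X^(2*f.natDegree+1)), hd,
        ip_congr rfl ((pow_add (Polynomial.X : Polynomial ℂ)
          (2*f.natDegree+1) (2*f.natDegree+1)).symm),
        ip_X_pow_right, Polynomial.coeff_eq_zero_of_natDegree_lt hdeg1, mul_zero]
  have hdeg2 : (f.comp (-Polynomial.X) * (f * (g * g.comp (-Polynomial.X)))).natDegree
      < (2*f.natDegree+1) + (2*f.natDegree+1) := by
    refine lt_of_le_of_lt (bound4 _ _ _ _) ?_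
    have h1 := natDegree_comp_neg_X_le f
    have h2 := natDegree_comp_neg_X_le g
    omega
  have H41 : ip (sp f * tp f) (g * g.comp (-Polynomial.X)) = 0 := by
    rw [bridge_left_t f (sp f) (g * g.comp (-Polynomial.X)),
        bridge_left_s f (Polynomial.X^(2*f.natDegree+1)) (f * (g * g.comp (-Polynomial.X))),
        ip_congr ((pow_add (Polynomial.X : Polynomial ℂ)
          (2*f.natDegree+1) (2*f.natDegree+1)).symm) rfl,
        ip_X_pow_left, Polynomial.coeff_eq_zero_of_natDegree_lt hdeg2, map_zero, mul_zero]
  rw [H12, H13, H14, H21, H22, H23, H24, H31, H32, H33, H34, H41, H42, H43, H44]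
  rcases hσpm with h1|h1 <;> rcases neg_one_pow_cases f.natDegree with h2|h2 <;>
    rw [h1, h2] <;> ring

end StepW

/-- Exact formula for the crosscorrelation demerit factor ‖f_n g_n‖₂²/(‖f_n‖₂²‖g_n‖₂²)
of a pair of stems of Rudin-Shapiro-like polynomials. -/
theorem cdf_exact_formula (f g : ℕ → Polynomial ℂ) (σ : ℕ → ℝ)
    (hσ : ∀ n, σ n = 1 ∨ σ n = -1)
    (hne_f : f 0 ≠ 0) (hne_g : g 0 ≠ 0)
    (hf0 : (f 0).coeff 0 ≠ 0) (hg0 : (g 0).coeff 0 ≠ 0)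
    (hlen : (f 0).natDegree = (g 0).natDegree)
    (hf : ∀ n, f (n + 1) = f n + Polynomial.C (σ n : ℂ) *
      (Polynomial.X ^ ((f n).natDegree + 1) * (dagger (f n)).comp (-Polynomial.X)))
    (hg : ∀ n, g (n + 1) = g n + Polynomial.C (σ n : ℂ) *
      (Polynomial.X ^ ((g n).natDegree + 1) * (dagger (g n)).comp (-Polynomial.X)))
    (n : ℕ) :
    uu (f n) (g n) / (n2 (f n) * n2 (g n))
      = (2 * uu (f 0) (g 0) + vv (f 0) (g 0) + ww (f 0) (g 0)) / (3 * n2 (f 0) * n2 (g 0))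
        + (-(1:ℝ)/2) ^ n *
          ((uu (f 0) (g 0) - vv (f 0) (g 0) - ww (f 0) (g 0)) / (3 * n2 (f 0) * n2 (g 0))) := by
  have hσpm : ∀ k, ((σ k : ℝ) : ℂ) = 1 ∨ ((σ k : ℝ) : ℂ) = -1 := by
    intro k; rcases hσ k with h|h <;> [left; right] <;> rw [h] <;> norm_num
  have hσne : ∀ k, ((σ k : ℝ) : ℂ) ≠ 0 := by
    intro k; rcases hσpm k with h|h <;> rw [h] <;> norm_num
  have hf' : ∀ k, f (k+1) = f k + Polynomial.C ((σ k : ℝ) : ℂ) * sp (f k) := hf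
  have hg' : ∀ k, g (k+1) = g k + Polynomial.C ((σ k : ℝ) : ℂ) * sp (g k) := hg
  -- invariants
  have inv : ∀ k, (f k).coeff 0 = (f 0).coeff 0 ∧ (g k).coeff 0 = (g 0).coeff 0
      ∧ (g k).natDegree = (f k).natDegree := by
    intro k
    induction k with
    | zero => exact ⟨rfl, rfl, hlen.symm⟩
    | succ k ih =>
      obtain ⟨h1, h2, h3⟩ := ih
      refine ⟨?_, ?_, ?_⟩
      · rw [hf' k, step_coeff_zero, h1]
      · rw [hg' k, step_coeff_zero, h2]
      · rw [hf' k, hg' k, step_natDegree _ (hσne k) (by rw [h2]; exact hg0),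
            step_natDegree _ (hσne k) (by rw [h1]; exact hf0), h3]
  -- real-level one-step recurrences
  have stepu : ∀ k, uu (f (k+1)) (g (k+1))
      = 2 * uu (f k) (g k) + 2 * vv (f k) (g k) + 2 * ww (f k) (g k) := by
    intro k
    rw [uu_eq, uu_eq, vv_eq, ww_eq, hf' k, hg' k,
        stepU (f k) (g k) _ (by rcases hσpm k with h|h <;> simp [h])
          (by rcases hσpm k with h|h <;> rw [h] <;> norm_num) (inv k).2.2]
    rw [ip_comm (g k * (g k).comp (-Polynomial.X))]
    simp [Complex.add_re, Complex.sub_re]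
    ring
  have stepv : ∀ k, vv (f (k+1)) (g (k+1))
      = 2 * uu (f k) (g k) + 2 * vv (f k) (g k) - 2 * ww (f k) (g k) := by
    intro k
    rw [vv_eq, uu_eq, vv_eq, ww_eq, hf' k, hg' k,
        stepV (f k) (g k) _ (hσpm k) (inv k).2.2]
    rw [ip_comm (g k * (g k).comp (-Polynomial.X))]
    simp [Complex.add_re, Complex.sub_re]
    ring
  have stepw : ∀ k, ww (f (k+1)) (g (k+1))
      = 2 * uu (f k) (g k) - 2 * vv (f k) (g k) + 2 * ww (f k) (g k) := by
    intro k
    rw [ww_eq, uu_eq, vv_eq, ww_eq, hf' k, hg' k,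
        stepW (f k) (g k) _ (hσpm k) (inv k).2.2,
        ip_comm (g k * (g k).comp (-Polynomial.X)) (f k * (f k).comp (-Polynomial.X)),
        ip_comm (g k * (f k * (f k).comp (-Polynomial.X)))
          (Polynomial.X ^ (2 * (f k).natDegree + 1) * g k),
        ip_comm (f k * (g k * (g k).comp (-Polynomial.X)))
          (Polynomial.X ^ (2 * (f k).natDegree + 1) * f k)]
    rcases hσpm k with h|h <;> rw [h] <;>
      rcases neg_one_pow_cases (f k).natDegree with h2|h2 <;> rw [h2] <;>
      simp [Complex.add_re, Complex.sub_re, Complex.mul_re, Complex.conj_re, Complex.conj_im] <;>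
      ring
  have stepn : ∀ k, n2 (f (k+1)) * n2 (g (k+1)) = 4 * (n2 (f k) * n2 (g k)) := by
    intro k
    rw [n2_eq, n2_eq, n2_eq, n2_eq, hf' k, hg' k,
        stepN (f k) _ (by rcases hσpm k with h|h <;> simp [h])
          (by rcases hσpm k with h|h <;> rw [h] <;> norm_num),
        stepN (g k) _ (by rcases hσpm k with h|h <;> simp [h])
          (by rcases hσpm k with h|h <;> rw [h] <;> norm_num)]
    simp [Complex.mul_re]
    ring
  -- closed forms
  set u0 := uu (f 0) (g 0) with hu0
  set v0 := vv (f 0) (g 0) with hv0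
  set w0 := ww (f 0) (g 0) with hw0
  have closed : ∀ k,
      uu (f k) (g k) = (4:ℝ)^k * ((2*u0 + v0 + w0)/3) + (-2:ℝ)^k * ((u0 - v0 - w0)/3)
      ∧ vv (f k) (g k) = (4:ℝ)^k * ((u0 + 2*v0 - w0)/3) - (-2:ℝ)^k * ((u0 - v0 - w0)/3)
      ∧ ww (f k) (g k) = (4:ℝ)^k * ((u0 - v0 + 2*w0)/3) + (-2:ℝ)^k * ((-u0 + v0 + w0)/3) := by
    intro k
    induction k with
    | zero => norm_num; refine ⟨by ring, by ring, by ring⟩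
    | succ k ih =>
      obtain ⟨h1, h2, h3⟩ := ih
      refine ⟨?_, ?_, ?_⟩
      · rw [stepu k, h1, h2, h3, pow_succ, pow_succ]; ring
      · rw [stepv k, h1, h2, h3, pow_succ, pow_succ]; ring
      · rw [stepw k, h1, h2, h3, pow_succ, pow_succ]; ring
  have closedN : ∀ k, n2 (f k) * n2 (g k) = (4:ℝ)^k * (n2 (f 0) * n2 (g 0)) := by
    intro k
    induction k with
    | zero => simp
    | succ k ih => rw [stepn k, ih, pow_succ]; ring
  have hN0 : 0 < n2 (f 0) * n2 (g 0) := by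
    rw [n2_eq, n2_eq]
    exact mul_pos (ip_self_re_pos hne_f) (ip_self_re_pos hne_g)
  have h4 : (0:ℝ) < (4:ℝ)^n := by positivity
  rw [(closed n).1, closedN n]
  rw [show ((-2:ℝ))^n = (-(1:ℝ)/2)^n * 4^n by rw [← mul_pow]; norm_num]
  set t := (-(1:ℝ)/2)^n with ht
  set q := (4:ℝ)^n with hq'
  have hq : q ≠ 0 := ne_of_gt h4
  have hNf0 : n2 (f 0) ≠ 0 := by
    rw [n2_eq]; exact ne_of_gt (ip_self_re_pos hne_f)
  have hNg0 : n2 (g 0) ≠ 0 := by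
    rw [n2_eq]; exact ne_of_gt (ip_self_re_pos hne_g)
  field_simp
end
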